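/- arXiv:1809.07997 — 4 statements merged into one kernel-verified Lean document; each statement's English description precedes it below -/
import Mathlib

section
/- Let n ≥ 3 and m ≥ 3. The Cayley graph of the group ℤ/n × ℤ/m with respect to the standard generating set {(1,0),(0,1)} contains a subdivision of the complete bipartite graph K_{3,3} as a subgraph. -/
/-- `G` contains a subdivision of `H` as a subgraph: there are branch vertices (an injection
`f` of the vertices of `H` into `G`) and, for each edge of `H`, a path in `G` between the
corresponding branch vertices, such that these paths are internally disjoint from each other
and from the set of branch vertices. -/
def ContainsSubdivision {V W : Type} (G : SimpleGraph V) (H : SimpleGraph W) : Prop :=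
  ∃ (f : W ↪ V) (p : ∀ {a b : W}, H.Adj a b → G.Walk (f a) (f b)),
    (∀ {a b : W} (h : H.Adj a b), (p h).IsPath) ∧
    (∀ {a b : W} (h : H.Adj a b), p h.symm = (p h).reverse) ∧
    (∀ {a b : W} (h : H.Adj a b) (c : W), f c ∈ (p h).support → c = a ∨ c = b) ∧
    (∀ {a b c d : W} (h₁ : H.Adj a b) (h₂ : H.Adj c d), s(a, b) ≠ s(c, d) →
      ∀ x, x ∈ (p h₁).support → x ∈ (p h₂).support → ∃ w : W, x = f w)

/-- Planarity, via the Kuratowski (Dirac–Schuster in the infinite case) characterization: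
a simple graph is planar iff it contains no subdivision of `K₅` or `K₃,₃` as a subgraph. -/
def IsPlanar {V : Type} (G : SimpleGraph V) : Prop :=
  ¬ ContainsSubdivision G (SimpleGraph.completeGraph (Fin 5)) ∧
  ¬ ContainsSubdivision G (completeBipartiteGraph (Fin 3) (Fin 3))

/-- The (simple, undirected) Cayley graph of a group w.r.t. a generating set. -/
def cayleyGraph (G : Type) [Group G] (S : Set G) : SimpleGraph G :=
  SimpleGraph.fromRel (fun g h => ∃ s ∈ S, h = g * s)

/-- The (simple, undirected) Cayley graph of an additive group w.r.t. a generating set. -/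
def cayleyGraphAdd (G : Type) [AddGroup G] (S : Set G) : SimpleGraph G :=
  SimpleGraph.fromRel (fun g h => ∃ s ∈ S, h = g + s)

open scoped commutatorElement

/-- The relations of the graph product of finite cyclic groups over the labelled graph `Γ`:
the vertex group at `v` is cyclic of order `o v`, and generators of adjacent vertex groups
commute. -/
def graphProductRels {V : Type} (Γ : SimpleGraph V) (o : V → ℕ) : Set (FreeGroup V) :=
  {r | (∃ v, r = FreeGroup.of v ^ o v) ∨
       (∃ v w, Γ.Adj v w ∧ r = ⁅FreeGroup.of v, FreeGroup.of w⁆)}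

/-- The graph product of finite cyclic groups over the labelled graph `Γ`. -/
def GraphProduct {V : Type} (Γ : SimpleGraph V) (o : V → ℕ) : Type :=
  PresentedGroup (graphProductRels Γ o)

instance {V : Type} (Γ : SimpleGraph V) (o : V → ℕ) : Group (GraphProduct Γ o) :=
  inferInstanceAs (Group (PresentedGroup (graphProductRels Γ o)))

/-- The Cayley graph of the graph product `G(Γ)` with respect to the standard generators. -/
def cayleyGraphGP {V : Type} (Γ : SimpleGraph V) (o : V → ℕ) : SimpleGraph (GraphProduct Γ o) :=
  cayleyGraph (GraphProduct Γ o) (Set.range (PresentedGroup.of : V → GraphProduct Γ o))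

/-- The cycle graph `C_k` on `ZMod k` (`k ≥ 3`). -/
def cycleG (k : ℕ) : SimpleGraph (ZMod k) :=
  SimpleGraph.fromRel (fun i j => j = i + 1)

/-- A group is finitely presented. -/
def IsFinitelyPresented (G : Type) [Group G] : Prop :=
  ∃ (n : ℕ) (rels : Set (FreeGroup (Fin n))), rels.Finite ∧ Nonempty (G ≃* PresentedGroup rels)

namespace K33
open SimpleGraph

variable {n m : ℕ}

abbrev GG (n m : ℕ) : SimpleGraph (ZMod n × ZMod m) :=
  cayleyGraphAdd (ZMod n × ZMod m) {(1, 0), (0, 1)}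

lemma cast_inj_of_lt {n a b : ℕ} (ha : a < n) (hb : b < n)
    (h : (a : ZMod n) = (b : ZMod n)) : a = b := by
  haveI : NeZero n := ⟨by omega⟩
  have := congrArg ZMod.val h
  rwa [ZMod.val_cast_of_lt ha, ZMod.val_cast_of_lt hb] at this

lemma one_ne_zero' (hn : 3 ≤ n) : (1 : ZMod n) ≠ 0 := by
  intro h
  have : ((1:ℕ) : ZMod n) = ((0:ℕ) : ZMod n) := by simpa using h
  exact absurd (cast_inj_of_lt (by omega) (by omega) this) (by omega)

lemma adjH (h1 : (1 : ZMod n) ≠ 0) (v : ZMod n × ZMod m) :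
    (GG n m).Adj v (v + (1, 0)) := by
  refine (SimpleGraph.fromRel_adj _ _ _).2 ⟨?_, Or.inl ⟨(1,0), by simp, rfl⟩⟩
  intro hv
  apply h1
  have := (left_eq_add.mp hv)
  exact (Prod.ext_iff.mp this).1

lemma adjV (h1 : (1 : ZMod m) ≠ 0) (v : ZMod n × ZMod m) :
    (GG n m).Adj v (v + (0, 1)) := by
  refine (SimpleGraph.fromRel_adj _ _ _).2 ⟨?_, Or.inl ⟨(0,1), by simp, rfl⟩⟩
  intro hv
  apply h1
  exact (Prod.ext_iff.mp (left_eq_add.mp hv)).2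

def hW (h1 : (1 : ZMod n) ≠ 0) (v : ZMod n × ZMod m) :
    (k : ℕ) → (GG n m).Walk v (v + ((k : ZMod n), 0))
  | 0 => Walk.nil.copy rfl (by simp)
  | (k+1) => ((hW h1 v k).concat (adjH h1 _)).copy rfl
      (by rw [add_assoc]; congr 1; simp [Prod.ext_iff])

def vW (h1 : (1 : ZMod m) ≠ 0) (v : ZMod n × ZMod m) :
    (k : ℕ) → (GG n m).Walk v (v + (0, (k : ZMod m)))
  | 0 => Walk.nil.copy rfl (by simp)
  | (k+1) => ((vW h1 v k).concat (adjV h1 _)).copy rfl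
      (by rw [add_assoc]; congr 1; simp [Prod.ext_iff])

lemma hW_support (h1 : (1 : ZMod n) ≠ 0) (v : ZMod n × ZMod m) (k : ℕ) :
    (hW h1 v k).support = (List.range (k+1)).map (fun i : ℕ => v + ((i : ZMod n), 0)) := by
  induction k with
  | zero => simp [hW, Prod.mk_zero_zero, List.range_succ]
  | succ k ih =>
      rw [hW]
      simp only [Walk.support_copy, Walk.support_concat, ih, List.range_succ, List.map_append,
        List.concat_eq_append, List.map_cons, List.map_nil]
      congr 2
      rw [add_assoc]; congr 1; simp [Prod.ext_iff]

lemma vW_support (h1 : (1 : ZMod m) ≠ 0) (v : ZMod n × ZMod m) (k : ℕ) :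
    (vW h1 v k).support = (List.range (k+1)).map (fun i : ℕ => v + (0, (i : ZMod m))) := by
  induction k with
  | zero => simp [vW, Prod.mk_zero_zero, List.range_succ]
  | succ k ih =>
      rw [vW]
      simp only [Walk.support_copy, Walk.support_concat, ih, List.range_succ, List.map_append,
        List.concat_eq_append, List.map_cons, List.map_nil]
      congr 2
      rw [add_assoc]; congr 1; simp [Prod.ext_iff]


lemma mem_hW {h1 : (1 : ZMod n) ≠ 0} {v : ZMod n × ZMod m} {k : ℕ} {z} :
    z ∈ (hW h1 v k).support ↔ ∃ i, i ≤ k ∧ z = v + ((i : ZMod n), 0) := by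
  simp [hW_support, Nat.lt_succ_iff, eq_comm]

lemma mem_vW {h1 : (1 : ZMod m) ≠ 0} {v : ZMod n × ZMod m} {k : ℕ} {z} :
    z ∈ (vW h1 v k).support ↔ ∃ i, i ≤ k ∧ z = v + (0, (i : ZMod m)) := by
  simp [vW_support, Nat.lt_succ_iff, eq_comm]

lemma hW_nodup {h1 : (1 : ZMod n) ≠ 0} {v : ZMod n × ZMod m} {k : ℕ} (hk : k < n) :
    (hW h1 v k).support.Nodup := by
  rw [hW_support]
  refine List.Nodup.map_on ?_ List.nodup_range
  intro a ha b hb hab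
  rw [List.mem_range] at ha hb
  have h2 := add_left_cancel hab
  exact cast_inj_of_lt (by omega) (by omega) (Prod.ext_iff.mp h2).1

lemma vW_nodup {h1 : (1 : ZMod m) ≠ 0} {v : ZMod n × ZMod m} {k : ℕ} (hk : k < m) :
    (vW h1 v k).support.Nodup := by
  rw [vW_support]
  refine List.Nodup.map_on ?_ List.nodup_range
  intro a ha b hb hab
  rw [List.mem_range] at ha hb
  have h2 := add_left_cancel hab
  exact cast_inj_of_lt (by omega) (by omega) (Prod.ext_iff.mp h2).2

/-! arithmetic in `ZMod` -/

lemma castEq {n a b : ℕ} (ha : 0 < a) (ha' : a ≤ n) (hb : 0 < b) (hb' : b ≤ n) :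
    ((a : ZMod n) = (b : ZMod n)) ↔ a = b := by
  rw [ZMod.natCast_eq_natCast_iff, Nat.ModEq]
  rcases eq_or_lt_of_le ha' with h1 | h1 <;> rcases eq_or_lt_of_le hb' with h2 | h2
  · rw [h1, h2]; simp
  · rw [h1, Nat.mod_self, Nat.mod_eq_of_lt h2]; omega
  · rw [h2, Nat.mod_self, Nat.mod_eq_of_lt h1]; omega
  · rw [Nat.mod_eq_of_lt h1, Nat.mod_eq_of_lt h2]

lemma z0 (hn : 3 ≤ n) : (0 : ZMod n) = ((n : ℕ) : ZMod n) := (ZMod.natCast_self n).symm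
lemma z1 : (1 : ZMod n) = ((1 : ℕ) : ZMod n) := by norm_cast
lemma z2 : (2 : ZMod n) = ((2 : ℕ) : ZMod n) := by norm_cast
lemma zI (i : ℕ) : (2 : ZMod n) + (i : ℕ) = ((2 + i : ℕ) : ZMod n) := by push_cast; ring

lemma c20 (hn : 3 ≤ n) {i : ℕ} (hi : i ≤ n - 2) :
    ((2 : ZMod n) + (i : ℕ) = 0) ↔ i = n - 2 := by
  rw [zI, z0 hn, castEq (by omega) (by omega) (by omega) (le_refl n)]; omega

lemma c21 (hn : 3 ≤ n) {i : ℕ} (hi : i ≤ n - 2) : (2 : ZMod n) + (i : ℕ) ≠ 1 := by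
  rw [Ne, zI, z1, castEq (by omega) (by omega) (by omega) (by omega)]; omega

lemma c22 (hn : 3 ≤ n) {i : ℕ} (hi : i ≤ n - 2) :
    ((2 : ZMod n) + (i : ℕ) = 2) ↔ i = 0 := by
  rw [zI, z2, castEq (by omega) (by omega) (by omega) (by omega)]; omega

lemma cII (hn : 3 ≤ n) {i j : ℕ} (hi : i ≤ n - 2) (hj : j ≤ n - 2) :
    ((2 : ZMod n) + (i : ℕ) = (2 : ZMod n) + (j : ℕ)) ↔ i = j := by
  rw [zI, zI, castEq (by omega) (by omega) (by omega) (by omega)]; omega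

lemma n01 (hn : 3 ≤ n) : (0 : ZMod n) ≠ 1 := by
  rw [z0 hn, z1, Ne, castEq (by omega) (le_refl n) (by omega) (by omega)]; omega
lemma n02 (hn : 3 ≤ n) : (0 : ZMod n) ≠ 2 := by
  rw [z0 hn, z2, Ne, castEq (by omega) (le_refl n) (by omega) (by omega)]; omega
lemma n12 (hn : 3 ≤ n) : (1 : ZMod n) ≠ 2 := by
  rw [z1, z2, Ne, castEq (by omega) (by omega) (by omega) (by omega)]; omega


/-! the nine walks -/

section Walks
variable (hn : 3 ≤ n) (hm : 3 ≤ m)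

def w00 : (GG n m).Walk ((0:ZMod n),(0:ZMod m)) (0,1) :=
  (Walk.cons (adjV (one_ne_zero' hm) (0,0)) Walk.nil).copy rfl
    (by simp [Prod.ext_iff, Prod.mk_add_mk])

def w10 : (GG n m).Walk ((1:ZMod n),(1:ZMod m)) (0,1) :=
  ((Walk.cons (adjH (one_ne_zero' hn) (0,1)) Walk.nil).copy rfl
    (by simp [Prod.ext_iff, Prod.mk_add_mk])).reverse

def w11 : (GG n m).Walk ((1:ZMod n),(1:ZMod m)) (1,2) :=
  (Walk.cons (adjV (one_ne_zero' hm) (1,1)) Walk.nil).copy rfl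
    (by simp [Prod.ext_iff, Prod.mk_add_mk, one_add_one_eq_two])

def w21 : (GG n m).Walk ((2:ZMod n),(2:ZMod m)) (1,2) :=
  ((Walk.cons (adjH (one_ne_zero' hn) (1,2)) Walk.nil).copy rfl
    (by simp [Prod.ext_iff, Prod.mk_add_mk, one_add_one_eq_two])).reverse

def w22 : (GG n m).Walk ((2:ZMod n),(2:ZMod m)) (2,0) :=
  (vW (one_ne_zero' hm) (2,2) (m-2)).copy rfl
    (by
      have h2 : (2:ZMod m) + ((m-2 : ℕ) : ZMod m) = 0 := (c20 hm (le_refl _)).mpr rfl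
      simp [Prod.ext_iff, Prod.mk_add_mk, h2])

def w02 : (GG n m).Walk ((0:ZMod n),(0:ZMod m)) (2,0) :=
  ((hW (one_ne_zero' hn) (2,0) (n-2)).copy rfl
    (by
      have h2 : (2:ZMod n) + ((n-2 : ℕ) : ZMod n) = 0 := (c20 hn (le_refl _)).mpr rfl
      simp [Prod.ext_iff, Prod.mk_add_mk, h2])).reverse

def w01 : (GG n m).Walk ((0:ZMod n),(0:ZMod m)) (1,2) :=
  (((vW (one_ne_zero' hm) (0,2) (m-2)).copy rfl
    (by
      have h2 : (2:ZMod m) + ((m-2 : ℕ) : ZMod m) = 0 := (c20 hm (le_refl _)).mpr rfl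
      simp [Prod.ext_iff, Prod.mk_add_mk, h2])).reverse).append
  ((Walk.cons (adjH (one_ne_zero' hn) (0,2)) Walk.nil).copy rfl
    (by simp [Prod.ext_iff, Prod.mk_add_mk]))

def w12 : (GG n m).Walk ((1:ZMod n),(1:ZMod m)) (2,0) :=
  (((Walk.cons (adjV (one_ne_zero' hm) (1,0)) Walk.nil).copy rfl
    (by simp [Prod.ext_iff, Prod.mk_add_mk])).reverse).append
  ((Walk.cons (adjH (one_ne_zero' hn) (1,0)) Walk.nil).copy rfl
    (by simp [Prod.ext_iff, Prod.mk_add_mk, one_add_one_eq_two]))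

def w20 : (GG n m).Walk ((2:ZMod n),(2:ZMod m)) (0,1) :=
  (((Walk.cons (adjV (one_ne_zero' hm) (2,1)) Walk.nil).copy rfl
    (by simp [Prod.ext_iff, Prod.mk_add_mk, one_add_one_eq_two])).reverse).append
  ((hW (one_ne_zero' hn) (2,1) (n-2)).copy rfl
    (by
      have h2 : (2:ZMod n) + ((n-2 : ℕ) : ZMod n) = 0 := (c20 hn (le_refl _)).mpr rfl
      simp [Prod.ext_iff, Prod.mk_add_mk, h2]))

/-! support characterizations -/

lemma S00 {z} : z ∈ (w00 hm (n := n)).support ↔ z = ((0:ZMod n),(0:ZMod m)) ∨ z = (0,1) := by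
  simp [w00, Prod.ext_iff, Prod.mk_add_mk]

lemma S10 {z} : z ∈ (w10 hn (m := m)).support ↔ z = ((1:ZMod n),(1:ZMod m)) ∨ z = (0,1) := by
  simp [w10, Prod.ext_iff, Prod.mk_add_mk, or_comm]

lemma S11 {z} : z ∈ (w11 hm (n := n)).support ↔ z = ((1:ZMod n),(1:ZMod m)) ∨ z = (1,2) := by
  simp [w11, Prod.ext_iff, Prod.mk_add_mk, one_add_one_eq_two]

lemma S21 {z} : z ∈ (w21 hn (m := m)).support ↔ z = ((2:ZMod n),(2:ZMod m)) ∨ z = (1,2) := by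
  simp [w21, Prod.ext_iff, Prod.mk_add_mk, one_add_one_eq_two, or_comm]

lemma S22 {z} : z ∈ (w22 hm (n := n)).support ↔
    ∃ i, i ≤ m-2 ∧ z = ((2:ZMod n), (2:ZMod m)+(i:ℕ)) := by
  simp [w22, mem_vW, Prod.mk_add_mk]

lemma S02 {z} : z ∈ (w02 hn (m := m)).support ↔
    ∃ i, i ≤ n-2 ∧ z = ((2:ZMod n)+(i:ℕ), (0:ZMod m)) := by
  simp [w02, mem_hW, Prod.mk_add_mk]

lemma S01 {z} : z ∈ (w01 hn hm).support ↔
    (∃ i, i ≤ m-2 ∧ z = ((0:ZMod n), (2:ZMod m)+(i:ℕ))) ∨ z = (1,2) := by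
  rw [w01, Walk.mem_support_append_iff]
  simp only [Walk.support_reverse, List.mem_reverse, Walk.support_copy, mem_vW]
  simp [Prod.mk_add_mk, Prod.ext_iff]
  constructor
  · rintro (⟨i, hi, h⟩ | h | h)
    · exact Or.inl ⟨i, hi, h⟩
    · exact Or.inl ⟨0, by omega, by simpa using h⟩
    · exact Or.inr h
  · rintro (⟨i, hi, h⟩ | h)
    · exact Or.inl ⟨i, hi, h⟩
    · exact Or.inr (Or.inr h)

lemma S12 {z} : z ∈ (w12 hn hm).support ↔
    z = ((1:ZMod n),(1:ZMod m)) ∨ z = (1,0) ∨ z = (2,0) := by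
  rw [w12, Walk.mem_support_append_iff]
  simp [Prod.mk_add_mk, Prod.ext_iff, one_add_one_eq_two, or_comm, or_assoc, or_left_comm]

lemma w20_support : (w20 hn hm).support
    = ((2:ZMod n),(2:ZMod m)) ::
      (List.range (n-1)).map (fun i : ℕ => ((2:ZMod n)+(i:ℕ), (1:ZMod m))) := by
  have h3 : n - 1 = (n - 2) + 1 := by omega
  rw [w20, Walk.support_append, Walk.support_reverse, Walk.support_copy, Walk.support_copy,
    hW_support, h3, List.range_succ_eq_map]
  simp only [List.map_map, List.map_cons, List.tail_cons, Walk.support_cons, Walk.support_nil,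
    List.reverse_cons, List.reverse_nil, List.nil_append, List.cons_append, Function.comp_def,
    Prod.mk_add_mk]
  norm_num

lemma S20 {z} : z ∈ (w20 hn hm).support ↔
    z = ((2:ZMod n),(2:ZMod m)) ∨ ∃ i, i ≤ n-2 ∧ z = ((2:ZMod n)+(i:ℕ), (1:ZMod m)) := by
  rw [w20_support hn hm]
  simp only [List.mem_cons, List.mem_map, List.mem_range]
  constructor
  · rintro (rfl | ⟨i, hi, rfl⟩)
    · exact Or.inl rfl
    · exact Or.inr ⟨i, by omega, rfl⟩
  · rintro (rfl | ⟨i, hi, rfl⟩)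
    · exact Or.inl rfl
    · exact Or.inr ⟨i, by omega, rfl⟩


/-! the walks are paths -/

lemma P00 : (w00 hm (n := n)).IsPath := by
  rw [Walk.isPath_def, w00, Walk.support_copy]
  simp [Prod.ext_iff, Prod.mk_add_mk, n01 hm]
  try exact one_ne_zero' hm

lemma P10 : (w10 hn (m := m)).IsPath := by
  rw [w10, Walk.isPath_reverse_iff, Walk.isPath_def, Walk.support_copy]
  simp [Prod.ext_iff, Prod.mk_add_mk, n01 hn]
  try exact one_ne_zero' hn

lemma P11 : (w11 hm (n := n)).IsPath := by
  rw [Walk.isPath_def, w11, Walk.support_copy]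
  simp [Prod.ext_iff, Prod.mk_add_mk, one_add_one_eq_two, n12 hm]
  try exact one_ne_zero' hm

lemma P21 : (w21 hn (m := m)).IsPath := by
  rw [w21, Walk.isPath_reverse_iff, Walk.isPath_def, Walk.support_copy]
  simp [Prod.ext_iff, Prod.mk_add_mk, one_add_one_eq_two, n12 hn]
  try exact one_ne_zero' hn

lemma P22 : (w22 hm (n := n)).IsPath := by
  rw [Walk.isPath_def, w22, Walk.support_copy]
  exact vW_nodup (by omega)

lemma P02 : (w02 hn (m := m)).IsPath := by
  rw [w02, Walk.isPath_reverse_iff, Walk.isPath_def, Walk.support_copy]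
  exact hW_nodup (by omega)

lemma P01 : (w01 hn hm).IsPath := by
  rw [Walk.isPath_def, w01, Walk.support_append, Walk.support_reverse, Walk.support_copy,
    Walk.support_copy]
  simp only [Walk.support_cons, Walk.support_nil, List.tail_cons]
  rw [List.nodup_append]
  refine ⟨List.nodup_reverse.2 (vW_nodup (by omega)), by simp, ?_⟩
  intro a ha hb
  rw [List.mem_reverse, vW_support] at ha
  simp only [List.mem_map, List.mem_range] at ha
  obtain ⟨i, _, rfl⟩ := ha
  intro hmem heq; simp only [List.mem_singleton] at hmem; subst hmem
  simp [Prod.ext_iff, Prod.mk_add_mk, n01 hn] at heq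

lemma P12 : (w12 hn hm).IsPath := by
  rw [Walk.isPath_def, w12, Walk.support_append, Walk.support_reverse, Walk.support_copy,
    Walk.support_copy]
  simp [Prod.ext_iff, Prod.mk_add_mk, one_add_one_eq_two, n01 hm, n12 hn, Ne.symm (n01 hm)]

lemma P20 : (w20 hn hm).IsPath := by
  rw [Walk.isPath_def, w20_support hn hm, List.nodup_cons]
  constructor
  · simp only [List.mem_map, List.mem_range]
    rintro ⟨i, hi, h⟩
    exact n12 hm (congrArg Prod.snd h)
  · refine List.Nodup.map_on ?_ List.nodup_range
    intro a ha b hb hab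
    rw [List.mem_range] at ha hb
    have := (Prod.ext_iff.mp hab).1
    exact (cII hn (by omega) (by omega)).mp this

end Walks

/-! branch vertices -/

def A : Fin 3 → ZMod n × ZMod m
  | ⟨0,_⟩ => (0,0)
  | ⟨1,_⟩ => (1,1)
  | ⟨2,_⟩ => (2,2)
  | ⟨k+3,h⟩ => absurd h (by omega)

def B : Fin 3 → ZMod n × ZMod m
  | ⟨0,_⟩ => (0,1)
  | ⟨1,_⟩ => (1,2)
  | ⟨2,_⟩ => (2,0)
  | ⟨k+3,h⟩ => absurd h (by omega)

def isBranch (z : ZMod n × ZMod m) : Prop := ∃ c : Fin 3 ⊕ Fin 3, z = Sum.elim A B c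

lemma bA0 : Sum.elim (A (n:=n) (m:=m)) B (Sum.inl 0) = (0,0) := rfl
lemma bA1 : Sum.elim (A (n:=n) (m:=m)) B (Sum.inl 1) = (1,1) := rfl
lemma bA2 : Sum.elim (A (n:=n) (m:=m)) B (Sum.inl 2) = (2,2) := rfl
lemma bB0 : Sum.elim (A (n:=n) (m:=m)) B (Sum.inr 0) = (0,1) := rfl
lemma bB1 : Sum.elim (A (n:=n) (m:=m)) B (Sum.inr 1) = (1,2) := rfl
lemma bB2 : Sum.elim (A (n:=n) (m:=m)) B (Sum.inr 2) = (2,0) := rfl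


section Main
variable (hn : 3 ≤ n) (hm : 3 ≤ m)

def ew : (i j : Fin 3) → (GG n m).Walk (A i) (B j)
  | ⟨0,_⟩, ⟨0,_⟩ => w00 hm
  | ⟨0,_⟩, ⟨1,_⟩ => w01 hn hm
  | ⟨0,_⟩, ⟨2,_⟩ => w02 hn
  | ⟨1,_⟩, ⟨0,_⟩ => w10 hn
  | ⟨1,_⟩, ⟨1,_⟩ => w11 hm
  | ⟨1,_⟩, ⟨2,_⟩ => w12 hn hm
  | ⟨2,_⟩, ⟨0,_⟩ => w20 hn hm
  | ⟨2,_⟩, ⟨1,_⟩ => w21 hn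
  | ⟨2,_⟩, ⟨2,_⟩ => w22 hm
  | ⟨_+3,h⟩, _ => absurd h (by omega)
  | _, ⟨_+3,h⟩ => absurd h (by omega)

lemma ewPath : ∀ i j : Fin 3, (ew hn hm i j).IsPath
  | ⟨0,_⟩, ⟨0,_⟩ => P00 hm
  | ⟨0,_⟩, ⟨1,_⟩ => P01 hn hm
  | ⟨0,_⟩, ⟨2,_⟩ => P02 hn
  | ⟨1,_⟩, ⟨0,_⟩ => P10 hn
  | ⟨1,_⟩, ⟨1,_⟩ => P11 hm
  | ⟨1,_⟩, ⟨2,_⟩ => P12 hn hm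
  | ⟨2,_⟩, ⟨0,_⟩ => P20 hn hm
  | ⟨2,_⟩, ⟨1,_⟩ => P21 hn
  | ⟨2,_⟩, ⟨2,_⟩ => P22 hm
  | ⟨_+3,h⟩, _ => absurd h (by omega)
  | _, ⟨_+3,h⟩ => absurd h (by omega)


lemma sh00 : ∀ x ∈ (w00 hm (n := n)).support, isBranch x := by
  intro x hx
  rcases (S00 hm).1 hx with rfl | rfl
  · exact ⟨Sum.inl 0, rfl⟩
  · exact ⟨Sum.inr 0, rfl⟩

lemma sh10 : ∀ x ∈ (w10 hn (m := m)).support, isBranch x := by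
  intro x hx
  rcases (S10 hn).1 hx with rfl | rfl
  · exact ⟨Sum.inl 1, rfl⟩
  · exact ⟨Sum.inr 0, rfl⟩

lemma sh11 : ∀ x ∈ (w11 hm (n := n)).support, isBranch x := by
  intro x hx
  rcases (S11 hm).1 hx with rfl | rfl
  · exact ⟨Sum.inl 1, rfl⟩
  · exact ⟨Sum.inr 1, rfl⟩

lemma sh21 : ∀ x ∈ (w21 hn (m := m)).support, isBranch x := by
  intro x hx
  rcases (S21 hn).1 hx with rfl | rfl
  · exact ⟨Sum.inl 2, rfl⟩
  · exact ⟨Sum.inr 1, rfl⟩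

/-! pairwise intersections of the five long walks are branch vertices -/

lemma p2202 : ∀ x, x ∈ (w22 hm (n:=n)).support → x ∈ (w02 hn (m:=m)).support → isBranch x := by
  intro x h1 h2
  obtain ⟨i, hi, rfl⟩ := (S22 hm).1 h1
  obtain ⟨j, hj, he⟩ := (S02 hn).1 h2
  exact ⟨Sum.inr 2, Prod.ext_iff.mpr ⟨rfl, (Prod.ext_iff.mp he).2⟩⟩

lemma p2212 : ∀ x, x ∈ (w22 hm (n:=n)).support → x ∈ (w12 hn hm).support → isBranch x := by
  intro x h1 h2
  obtain ⟨i, hi, rfl⟩ := (S22 hm).1 h1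
  rcases (S12 hn hm).1 h2 with he | he | he
  · exact absurd (Prod.ext_iff.mp he).1 (Ne.symm (n12 hn))
  · exact absurd (Prod.ext_iff.mp he).1 (Ne.symm (n12 hn))
  · exact ⟨Sum.inr 2, he⟩

lemma p2220 : ∀ x, x ∈ (w22 hm (n:=n)).support → x ∈ (w20 hn hm).support → isBranch x := by
  intro x h1 h2
  obtain ⟨i, hi, rfl⟩ := (S22 hm).1 h1
  rcases (S20 hn hm).1 h2 with he | ⟨j, hj, he⟩
  · exact ⟨Sum.inl 2, he⟩
  · exact absurd (Prod.ext_iff.mp he).2 (c21 hm hi)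

lemma p2201 : ∀ x, x ∈ (w22 hm (n:=n)).support → x ∈ (w01 hn hm).support → isBranch x := by
  intro x h1 h2
  obtain ⟨i, hi, rfl⟩ := (S22 hm).1 h1
  rcases (S01 hn hm).1 h2 with ⟨j, hj, he⟩ | he
  · exact absurd (Prod.ext_iff.mp he).1 (Ne.symm (n02 hn))
  · exact absurd (Prod.ext_iff.mp he).1 (Ne.symm (n12 hn))

lemma p0201 : ∀ x, x ∈ (w02 hn (m:=m)).support → x ∈ (w01 hn hm).support → isBranch x := by
  intro x h1 h2
  rcases (S01 hn hm).1 h2 with ⟨j, hj, rfl⟩ | rfl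
  · obtain ⟨i, hi, he⟩ := (S02 hn).1 h1
    exact ⟨Sum.inl 0, Prod.ext_iff.mpr ⟨rfl, (Prod.ext_iff.mp he).2⟩⟩
  · obtain ⟨i, hi, he⟩ := (S02 hn).1 h1
    exact absurd (Prod.ext_iff.mp he).2 (Ne.symm (n02 hm))

lemma p0212 : ∀ x, x ∈ (w02 hn (m:=m)).support → x ∈ (w12 hn hm).support → isBranch x := by
  intro x h1 h2
  obtain ⟨i, hi, rfl⟩ := (S02 hn).1 h1
  rcases (S12 hn hm).1 h2 with he | he | he
  · exact absurd (Prod.ext_iff.mp he).2 (n01 hm)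
  · exact absurd (Prod.ext_iff.mp he).1 ((c21 hn hi))
  · exact ⟨Sum.inr 2, he⟩

lemma p0220 : ∀ x, x ∈ (w02 hn (m:=m)).support → x ∈ (w20 hn hm).support → isBranch x := by
  intro x h1 h2
  obtain ⟨i, hi, rfl⟩ := (S02 hn).1 h1
  rcases (S20 hn hm).1 h2 with he | ⟨j, hj, he⟩
  · exact absurd (Prod.ext_iff.mp he).2 (n02 hm)
  · exact absurd (Prod.ext_iff.mp he).2 (n01 hm)

lemma p0112 : ∀ x, x ∈ (w01 hn hm).support → x ∈ (w12 hn hm).support → isBranch x := by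
  intro x h1 h2
  rcases (S01 hn hm).1 h1 with ⟨j, hj, rfl⟩ | rfl
  · rcases (S12 hn hm).1 h2 with he | he | he
    · exact absurd (Prod.ext_iff.mp he).1 (n01 hn)
    · exact absurd (Prod.ext_iff.mp he).1 (n01 hn)
    · exact absurd (Prod.ext_iff.mp he).1 (n02 hn)
  · rcases (S12 hn hm).1 h2 with he | he | he
    · exact absurd (Prod.ext_iff.mp he).2 (Ne.symm (n12 hm))
    · exact absurd (Prod.ext_iff.mp he).2 (Ne.symm (n02 hm))
    · exact absurd (Prod.ext_iff.mp he).1 (n12 hn)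

lemma p0120 : ∀ x, x ∈ (w01 hn hm).support → x ∈ (w20 hn hm).support → isBranch x := by
  intro x h1 h2
  rcases (S01 hn hm).1 h1 with ⟨j, hj, rfl⟩ | rfl
  · rcases (S20 hn hm).1 h2 with he | ⟨i, hi, he⟩
    · exact absurd (Prod.ext_iff.mp he).1 (n02 hn)
    · exact absurd (Prod.ext_iff.mp he).2 (c21 hm hj)
  · rcases (S20 hn hm).1 h2 with he | ⟨i, hi, he⟩
    · exact absurd (Prod.ext_iff.mp he).1 (n12 hn)
    · exact absurd (Prod.ext_iff.mp he).2 (Ne.symm (n12 hm))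

lemma p1220 : ∀ x, x ∈ (w12 hn hm).support → x ∈ (w20 hn hm).support → isBranch x := by
  intro x h1 h2
  rcases (S12 hn hm).1 h1 with rfl | rfl | rfl
  · rcases (S20 hn hm).1 h2 with he | ⟨i, hi, he⟩
    · exact absurd (Prod.ext_iff.mp he).1 (n12 hn)
    · exact absurd ((Prod.ext_iff.mp he).1).symm (c21 hn hi)
  · rcases (S20 hn hm).1 h2 with he | ⟨i, hi, he⟩
    · exact absurd (Prod.ext_iff.mp he).2 (n02 hm)
    · exact absurd (Prod.ext_iff.mp he).2 (n01 hm)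
  · rcases (S20 hn hm).1 h2 with he | ⟨i, hi, he⟩
    · exact absurd (Prod.ext_iff.mp he).2 (n02 hm)
    · exact absurd (Prod.ext_iff.mp he).2 (n01 hm)


lemma c21' (hn : 3 ≤ n) {i : ℕ} (hi : i ≤ n - 2) : (1:ZMod n) ≠ (2 : ZMod n) + (i : ℕ) :=
  fun h => c21 hn hi h.symm

set_option maxHeartbeats 2000000 in
lemma key : ∀ (i j k l : Fin 3), ¬(i = k ∧ j = l) → ∀ x, x ∈ (ew hn hm i j).support →
    x ∈ (ew hn hm k l).support → isBranch x := by
  intro i j k l hne x hx hy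
  fin_cases i <;> fin_cases j <;> fin_cases k <;> fin_cases l <;>
    simp only [ew] at hx hy <;>
    first
      | (exfalso; apply hne; exact ⟨rfl, rfl⟩)
      | exact sh00 hm x hx
      | exact sh00 hm x hy
      | exact sh10 hn x hx
      | exact sh10 hn x hy
      | exact sh11 hm x hx
      | exact sh11 hm x hy
      | exact sh21 hn x hx
      | exact sh21 hn x hy
      | exact p2202 hn hm x hx hy
      | exact p2202 hn hm x hy hx
      | exact p2212 hn hm x hx hy
      | exact p2212 hn hm x hy hx
      | exact p2220 hn hm x hx hy
      | exact p2220 hn hm x hy hx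
      | exact p2201 hn hm x hx hy
      | exact p2201 hn hm x hy hx
      | exact p0201 hn hm x hx hy
      | exact p0201 hn hm x hy hx
      | exact p0212 hn hm x hx hy
      | exact p0212 hn hm x hy hx
      | exact p0220 hn hm x hx hy
      | exact p0220 hn hm x hy hx
      | exact p0112 hn hm x hx hy
      | exact p0112 hn hm x hy hx
      | exact p0120 hn hm x hx hy
      | exact p0120 hn hm x hy hx
      | exact p1220 hn hm x hx hy
      | exact p1220 hn hm x hy hx

end Main
end K33

namespace K33
open SimpleGraph
variable {n m : ℕ} (hn : 3 ≤ n) (hm : 3 ≤ m)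

set_option maxHeartbeats 4000000 in
lemma branch : ∀ (i j : Fin 3) (c : Fin 3 ⊕ Fin 3),
    Sum.elim A B c ∈ (ew hn hm i j).support → c = Sum.inl i ∨ c = Sum.inr j := by
  intro i j c h
  fin_cases i <;> fin_cases j <;> rcases c with ci | ci <;> fin_cases ci <;>
    first
      | exact Or.inl rfl
      | exact Or.inr rfl
      | (exfalso
         simp only [ew, Sum.elim_inl, Sum.elim_inr, A, B] at h
         first
           | rw [S00 hm] at h | rw [S01 hn hm] at h | rw [S02 hn] at h
           | rw [S10 hn] at h | rw [S11 hm] at h | rw [S12 hn hm] at h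
           | rw [S20 hn hm] at h | rw [S21 hn] at h | rw [S22 hm] at h
         simp +contextual [Prod.ext_iff, Prod.fst_one, Prod.snd_one, Prod.fst_zero, Prod.snd_zero, n01 hn, n02 hn, n12 hn, n01 hm, n02 hm, n12 hm,
           Ne.symm (n01 hn), Ne.symm (n02 hn), Ne.symm (n12 hn),
           Ne.symm (n01 hm), Ne.symm (n02 hm), Ne.symm (n12 hm),
           c21 hn, c21 hm, c21' hn, c21' hm] at h
         try (obtain ⟨i', hi', hcon⟩ := h
              first
                | exact c21' hn hi' hcon
                | exact c21' hm hi' hcon))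
end K33
namespace K33
open SimpleGraph
variable {n m : ℕ}

lemma fInj (hn : 3 ≤ n) (hm : 3 ≤ m) :
    Function.Injective (Sum.elim (A (n:=n) (m:=m)) B) := by
  rintro (ci|ci) (cj|cj) h <;> fin_cases ci <;> fin_cases cj <;>
    first
      | rfl
      | (simp only [Sum.elim_inl, Sum.elim_inr, A, B, Prod.mk.injEq] at h
         rcases h with ⟨h1, h2⟩
         exfalso
         first
           | exact n01 hn h1 | exact n01 hn h1.symm | exact n02 hn h1 | exact n02 hn h1.symm
           | exact n12 hn h1 | exact n12 hn h1.symm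
           | exact n01 hm h2 | exact n01 hm h2.symm | exact n02 hm h2 | exact n02 hm h2.symm
           | exact n12 hm h2 | exact n12 hm h2.symm)

def pFun (hn : 3 ≤ n) (hm : 3 ≤ m) :
    ∀ {a b : Fin 3 ⊕ Fin 3}, (completeBipartiteGraph (Fin 3) (Fin 3)).Adj a b →
      (GG n m).Walk (Sum.elim A B a) (Sum.elim A B b)
  | Sum.inl i, Sum.inr j, _ => ew hn hm i j
  | Sum.inr j, Sum.inl i, _ => (ew hn hm i j).reverse
  | Sum.inl _, Sum.inl _, h => absurd h (by simp)
  | Sum.inr _, Sum.inr _, h => absurd h (by simp)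

variable (hn : 3 ≤ n) (hm : 3 ≤ m)

lemma pPath : ∀ {a b : Fin 3 ⊕ Fin 3} (h : (completeBipartiteGraph (Fin 3) (Fin 3)).Adj a b),
    (pFun hn hm h).IsPath := by
  rintro (i|i) (j|j) h
  · exact absurd h (by simp)
  · exact ewPath hn hm i j
  · exact (ewPath hn hm j i).reverse
  · exact absurd h (by simp)

lemma pSymm : ∀ {a b : Fin 3 ⊕ Fin 3} (h : (completeBipartiteGraph (Fin 3) (Fin 3)).Adj a b),
    pFun hn hm h.symm = (pFun hn hm h).reverse := by
  rintro (i|i) (j|j) h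
  · exact absurd h (by simp)
  · rfl
  · exact (Walk.reverse_reverse _).symm
  · exact absurd h (by simp)

lemma pBranch : ∀ {a b : Fin 3 ⊕ Fin 3} (h : (completeBipartiteGraph (Fin 3) (Fin 3)).Adj a b)
    (c : Fin 3 ⊕ Fin 3), Sum.elim A B c ∈ (pFun hn hm h).support → c = a ∨ c = b := by
  rintro (i|i) (j|j) h c hc
  · exact absurd h (by simp)
  · exact branch hn hm i j c hc
  · rw [show (pFun hn hm h).support = (ew hn hm j i).support.reverse from Walk.support_reverse _,
      List.mem_reverse] at hc
    exact (branch hn hm j i c hc).symm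
  · exact absurd h (by simp)

lemma pPair : ∀ {a b c d : Fin 3 ⊕ Fin 3} (h₁ : (completeBipartiteGraph (Fin 3) (Fin 3)).Adj a b)
    (h₂ : (completeBipartiteGraph (Fin 3) (Fin 3)).Adj c d), s(a, b) ≠ s(c, d) →
    ∀ x, x ∈ (pFun hn hm h₁).support → x ∈ (pFun hn hm h₂).support →
    ∃ w : Fin 3 ⊕ Fin 3, x = Sum.elim A B w := by
  have main1 : ∀ (i j k l : Fin 3) (h₁ : (completeBipartiteGraph (Fin 3) (Fin 3)).Adj
      (Sum.inl i) (Sum.inr j)) (h₂ : (completeBipartiteGraph (Fin 3) (Fin 3)).Adj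
      (Sum.inl k) (Sum.inr l)), ¬(i = k ∧ j = l) →
      ∀ x, x ∈ (pFun hn hm h₁).support → x ∈ (pFun hn hm h₂).support →
      ∃ w : Fin 3 ⊕ Fin 3, x = Sum.elim A B w := by
    intro i j k l h₁ h₂ hne x hx hy
    exact key hn hm i j k l hne x hx hy
  rintro (i|i) (j|j) (k|k) (l|l) h₁ h₂ hne x hx hy
  · exact absurd h₁ (by simp)
  · exact absurd h₁ (by simp)
  · exact absurd h₁ (by simp)
  · exact absurd h₁ (by simp)
  · exact absurd h₂ (by simp)
  · -- (inl i, inr j) vs (inl k, inr l)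
    refine main1 i j k l h₁ h₂ ?_ x hx hy
    rintro ⟨rfl, rfl⟩; exact hne rfl
  · -- (inl i, inr j) vs (inr k, inl l)
    rw [show (pFun hn hm h₂).support = (ew hn hm l k).support.reverse from Walk.support_reverse _,
      List.mem_reverse] at hy
    refine main1 i j l k h₁ (h₂.symm) ?_ x hx hy
    rintro ⟨rfl, rfl⟩; exact hne Sym2.eq_swap
  · exact absurd h₂ (by simp)
  · exact absurd h₂ (by simp)
  · -- (inr i, inl j) vs (inl k, inr l)
    rw [show (pFun hn hm h₁).support = (ew hn hm j i).support.reverse from Walk.support_reverse _,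
      List.mem_reverse] at hx
    refine main1 j i k l (h₁.symm) h₂ ?_ x hx hy
    rintro ⟨rfl, rfl⟩; exact hne Sym2.eq_swap
  · -- (inr i, inl j) vs (inr k, inl l)
    rw [show (pFun hn hm h₁).support = (ew hn hm j i).support.reverse from Walk.support_reverse _,
      List.mem_reverse] at hx
    rw [show (pFun hn hm h₂).support = (ew hn hm l k).support.reverse from Walk.support_reverse _,
      List.mem_reverse] at hy
    refine main1 j i l k (h₁.symm) (h₂.symm) ?_ x hx hy
    rintro ⟨rfl, rfl⟩
    exact hne (by rw [Sym2.eq_swap])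
  · exact absurd h₂ (by simp)
  · exact absurd h₁ (by simp)
  · exact absurd h₁ (by simp)
  · exact absurd h₁ (by simp)
  · exact absurd h₁ (by simp)

end K33


/-- The Cayley graph of `ℤ/n × ℤ/m` (`n, m ≥ 3`) with respect to `{(1,0), (0,1)}` contains a
subdivision of `K₃,₃` as a subgraph. -/
theorem stmt_0 (n m : ℕ) (hn : 3 ≤ n) (hm : 3 ≤ m) :
    ContainsSubdivision
      (cayleyGraphAdd (ZMod n × ZMod m) {(1, 0), (0, 1)})
      (completeBipartiteGraph (Fin 3) (Fin 3)) := by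
  refine ⟨⟨Sum.elim K33.A K33.B, K33.fInj hn hm⟩, fun {a b} h => K33.pFun hn hm h, ?_, ?_, ?_, ?_⟩
  · intro a b h; exact K33.pPath hn hm h
  · intro a b h; exact K33.pSymm hn hm h
  · intro a b h c hc; exact K33.pBranch hn hm h c hc
  · intro a b c d h₁ h₂ hne x hx hy; exact K33.pPair hn hm h₁ h₂ hne x hx hy
end

section
/- Let G = ⟨a, b, v | a² = b² = vⁿ = 1, [a,v] = [b,v] = [a,b] = 1⟩ ≅ ℤ/2 × ℤ/2 × ℤ/n with n ≥ 3 (graph product over a triangle). Then the Cayley graph of G with generating set {a, b, v} contains a subdivision of K_{3,3}, hence is non-planar. -/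
open scoped commutatorElement

set_option maxHeartbeats 2000000

namespace St7
open SimpleGraph

abbrev Gp (n : ℕ) := ZMod 2 × ZMod 2 × ZMod n
abbrev Γ (n : ℕ) := cayleyGraphAdd (Gp n) {(1, 0, 0), (0, 1, 0), (0, 0, 1)}

lemma zcast_inj {n : ℕ} {a b : ℕ} (ha : a < n) (hb : b < n) (h : ((a:ZMod n) = b)) : a = b := by
  rw [ZMod.natCast_eq_natCast_iff' a b n, Nat.mod_eq_of_lt ha, Nat.mod_eq_of_lt hb] at h
  exact h

lemma adjX (n : ℕ) (g h : Gp n) (e : h = g + (1,0,0)) : (Γ n).Adj g h := by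
  subst e
  refine ⟨?_, Or.inl ⟨(1,0,0), by simp, rfl⟩⟩
  intro e
  have := congrArg (fun p => p.1) e
  simp only [Prod.fst_add] at this
  revert this; generalize g.1 = t; revert t; decide

lemma adjY (n : ℕ) (g h : Gp n) (e : h = g + (0,1,0)) : (Γ n).Adj g h := by
  subst e
  refine ⟨?_, Or.inl ⟨(0,1,0), by simp, rfl⟩⟩
  intro e
  have := congrArg (fun p => p.2.1) e
  simp only [Prod.snd_add, Prod.fst_add] at this
  revert this; generalize g.2.1 = t; revert t; decide

lemma one_ne_zero' {n : ℕ} (hn : 3 ≤ n) : (1 : ZMod n) ≠ 0 := by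
  intro e1
  have e2 : ((1:ℕ) : ZMod n) = ((0:ℕ) : ZMod n) := by push_cast; exact e1
  have := zcast_inj (by omega) (by omega) e2
  omega

lemma adjZ (n : ℕ) (hn : 3 ≤ n) (g h : Gp n) (e : h = g + (0,0,1)) : (Γ n).Adj g h := by
  subst e
  refine ⟨?_, Or.inl ⟨(0,0,1), by simp, rfl⟩⟩
  intro e
  have := congrArg (fun p => p.2.2) e
  simp only [Prod.snd_add] at this
  exact one_ne_zero' hn (left_eq_add.mp this)

def zwalk (n : ℕ) (hn : 3 ≤ n) (g : Gp n) : (k : ℕ) → (Γ n).Walk g (g + (0,0,(k:ZMod n)))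
  | 0 => Walk.nil.copy rfl (by simp)
  | (k+1) =>
    (Walk.cons (adjZ n hn g _ rfl) (zwalk n hn (g + (0,0,1)) k)).copy rfl
      (by rw [add_assoc]; congr 1; simp [Prod.ext_iff]; ring)

lemma zwalk_support (n : ℕ) (hn : 3 ≤ n) (g : Gp n) (k : ℕ) :
    (zwalk n hn g k).support = (List.range (k+1)).map (fun (j:ℕ) => g + (0,0,(j:ZMod n))) := by
  induction k generalizing g with
  | zero =>
    rw [zwalk, Walk.support_copy, Walk.support_nil, List.range_succ]
    simp [Prod.ext_iff]
  | succ k ih =>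
    rw [zwalk, Walk.support_copy, Walk.support_cons, ih]
    conv_rhs => rw [List.range_succ_eq_map]
    simp only [List.map_cons, List.map_map, Function.comp]
    congr 1
    · simp [Prod.ext_iff]
    · apply List.map_congr_left
      intro j _
      simp only [Function.comp_apply, add_assoc]
      congr 1
      simp [Prod.ext_iff]
      push_cast
      ring

lemma zwalk_isPath (n : ℕ) (hn : 3 ≤ n) (g : Gp n) (k : ℕ) (hk : k < n) :
    (zwalk n hn g k).IsPath := by
  rw [Walk.isPath_def, zwalk_support]
  refine List.Nodup.map_on ?_ List.nodup_range
  intro a ha b hb e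
  rw [List.mem_range] at ha hb
  have e3 := congrArg (fun p => p.2.2) e
  simp only [Prod.snd_add] at e3
  have : (a : ZMod n) = b := by
    have := add_left_cancel e3
    exact this
  exact zcast_inj (by omega) (by omega) this

lemma mem_zwalk (n : ℕ) (hn : 3 ≤ n) (g : Gp n) (k : ℕ) (x : Gp n)
    (hx : x ∈ (zwalk n hn g k).support) :
    ∃ j : ℕ, j ≤ k ∧ x = g + (0,0,(j:ZMod n)) := by
  rw [zwalk_support] at hx
  rcases List.mem_map.mp hx with ⟨j, hj, rfl⟩
  exact ⟨j, by simpa using Nat.lt_succ_iff.mp (List.mem_range.mp hj), rfl⟩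

/-- branch vertices -/
def fB (n : ℕ) : Fin 3 ⊕ Fin 3 → Gp n
  | .inl ⟨0,_⟩ => (0,0,0)
  | .inl ⟨1,_⟩ => (0,0,1)
  | .inl ⟨2,_⟩ => (0,1,2)
  | .inl ⟨_+3,h⟩ => absurd h (by omega)
  | .inr ⟨0,_⟩ => (0,0,2)
  | .inr ⟨1,_⟩ => (0,1,0)
  | .inr ⟨2,_⟩ => (1,0,0)
  | .inr ⟨_+3,h⟩ => absurd h (by omega)

/-- ℕ-coordinates of a vertex -/
def Pc (n : ℕ) (a b m : ℕ) : Gp n := ((a:ZMod 2),(b:ZMod 2),(m:ZMod n))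

lemma Pc_inj (n : ℕ) {a b m a' b' m' : ℕ} (ha : a < 2) (hb : b < 2) (hm : m < n)
    (ha' : a' < 2) (hb' : b' < 2) (hm' : m' < n) (e : Pc n a b m = Pc n a' b' m') :
    a = a' ∧ b = b' ∧ m = m' := by
  have e1 := congrArg (fun p => p.1) e
  have e2 := congrArg (fun p => p.2.1) e
  have e3 := congrArg (fun p => p.2.2) e
  simp only [Pc] at e1 e2 e3
  exact ⟨zcast_inj ha ha' e1, zcast_inj hb hb' e2, zcast_inj hm hm' e3⟩

/-- the coordinate condition of each of the nine paths -/
def C (i j a b m : ℕ) : Prop :=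
  (i=0∧j=0∧(a=0∧b=0∧(m=0∨2 ≤ m))) ∨
  (i=0∧j=1∧(m=0∧a=0∧b ≤ 1)) ∨
  (i=0∧j=2∧(m=0∧b=0∧a ≤ 1)) ∨
  (i=1∧j=0∧(a=0∧b=0∧(m=1∨m=2))) ∨
  (i=1∧j=1∧((a=0∧b=0∧m=1)∨(a=0∧b=1∧m=1)∨(a=1∧b=1∧m=1)∨(a=1∧b=1∧m=0)∨(a=0∧b=1∧m=0))) ∨
  (i=1∧j=2∧((a=0∧b=0∧m=1)∨(a=1∧b=0∧m=1)∨(a=1∧b=0∧m=0))) ∨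
  (i=2∧j=0∧(m=2∧a=0∧b ≤ 1)) ∨
  (i=2∧j=1∧(a=0∧b=1∧(m=0∨2 ≤ m))) ∨
  (i=2∧j=2∧((a=0∧b=1∧m=2)∨(a=1∧b=1∧m=2)∨(a=1∧b=0∧(m=0∨2 ≤ m))))

lemma endpt (n : ℕ) (hn : 3 ≤ n) (x y : ZMod 2) :
    ((x,y,(2:ZMod n)) + ((0:ZMod 2),(0:ZMod 2),((n-2:ℕ):ZMod n))) = (x,y,(0:ZMod n)) := by
  have h3 : (2:ZMod n) + ((n-2:ℕ):ZMod n) = 0 := by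
    have h2 : (2:ZMod n) = ((2:ℕ):ZMod n) := by push_cast; rfl
    rw [h2, ← Nat.cast_add, show 2+(n-2) = n from by omega, ZMod.natCast_self]
  simp [Prod.ext_iff, h3]

def PW00 (n : ℕ) (hn : 3 ≤ n) : (Γ n).Walk (0,0,0) (0,0,2) :=
  (((zwalk n hn ((0:ZMod 2),(0:ZMod 2),(2:ZMod n)) (n-2)).copy rfl (endpt n hn 0 0)).reverse)

def PW01 (n : ℕ) : (Γ n).Walk (0,0,0) (0,1,0) :=
  (adjY n _ _ (by simp [Prod.ext_iff])).toWalk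

def PW02 (n : ℕ) : (Γ n).Walk (0,0,0) (1,0,0) :=
  (adjX n _ _ (by simp [Prod.ext_iff])).toWalk

def PW10 (n : ℕ) (hn : 3 ≤ n) : (Γ n).Walk (0,0,1) (0,0,2) :=
  (adjZ n hn _ _ (by simp [Prod.ext_iff]; norm_num)).toWalk

def PW11 (n : ℕ) (hn : 3 ≤ n) : (Γ n).Walk (0,0,1) (0,1,0) :=
  Walk.cons (adjY n (0,0,1) (0,1,1) (by simp [Prod.ext_iff]))
    (Walk.cons (adjX n (0,1,1) (1,1,1) (by simp [Prod.ext_iff]))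
      (Walk.cons (adjZ n hn (1,1,0) (1,1,1) (by simp [Prod.ext_iff])).symm
        (Walk.cons (adjX n (1,1,0) (0,1,0) (by simp [Prod.ext_iff]; decide)) Walk.nil)))

def PW12 (n : ℕ) (hn : 3 ≤ n) : (Γ n).Walk (0,0,1) (1,0,0) :=
  Walk.cons (adjX n (0,0,1) (1,0,1) (by simp [Prod.ext_iff]))
    (Walk.cons (adjZ n hn (1,0,0) (1,0,1) (by simp [Prod.ext_iff])).symm Walk.nil)

def PW20 (n : ℕ) : (Γ n).Walk (0,1,2) (0,0,2) :=
  (adjY n _ _ (by simp [Prod.ext_iff]; decide)).toWalk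

def PW21 (n : ℕ) (hn : 3 ≤ n) : (Γ n).Walk (0,1,2) (0,1,0) :=
  (zwalk n hn ((0:ZMod 2),(1:ZMod 2),(2:ZMod n)) (n-2)).copy rfl (endpt n hn 0 1)

def PW22 (n : ℕ) (hn : 3 ≤ n) : (Γ n).Walk (0,1,2) (1,0,0) :=
  Walk.cons (adjX n (0,1,2) (1,1,2) (by simp [Prod.ext_iff]))
    (Walk.cons (adjY n (1,1,2) (1,0,2) (by simp [Prod.ext_iff]; decide))
      ((zwalk n hn ((1:ZMod 2),(0:ZMod 2),(2:ZMod n)) (n-2)).copy rfl (endpt n hn 1 0)))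

def PW (n : ℕ) (hn : 3 ≤ n) : (i j : Fin 3) → (Γ n).Walk (fB n (.inl i)) (fB n (.inr j))
  | ⟨0,_⟩, ⟨0,_⟩ => PW00 n hn
  | ⟨0,_⟩, ⟨1,_⟩ => PW01 n
  | ⟨0,_⟩, ⟨2,_⟩ => PW02 n
  | ⟨1,_⟩, ⟨0,_⟩ => PW10 n hn
  | ⟨1,_⟩, ⟨1,_⟩ => PW11 n hn
  | ⟨1,_⟩, ⟨2,_⟩ => PW12 n hn
  | ⟨2,_⟩, ⟨0,_⟩ => PW20 n
  | ⟨2,_⟩, ⟨1,_⟩ => PW21 n hn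
  | ⟨2,_⟩, ⟨2,_⟩ => PW22 n hn
  | ⟨_+3,h⟩, _ => absurd h (by omega)
  | _, ⟨_+3,h⟩ => absurd h (by omega)

lemma tail_coord (n : ℕ) (hn : 3 ≤ n) (j : ℕ) (hj : j ≤ n-2) :
    ∃ m : ℕ, m < n ∧ (m = 0 ∨ 2 ≤ m) ∧ ((2:ZMod n) + ((j:ℕ):ZMod n) = ((m:ℕ):ZMod n)) := by
  rcases lt_or_ge (2+j) n with h|h
  · refine ⟨2+j, h, Or.inr (by omega), ?_⟩
    push_cast; ring
  · have hjn : 2+j = n := by omega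
    refine ⟨0, by omega, Or.inl rfl, ?_⟩
    have : (2:ZMod n) + ((j:ℕ):ZMod n) = ((2+j : ℕ) : ZMod n) := by push_cast; ring
    rw [this, hjn, ZMod.natCast_self, Nat.cast_zero]

lemma coords_tail (n : ℕ) (hn : 3 ≤ n) (x y : ZMod 2) (a b : ℕ) (hxa : x = (a:ZMod 2))
    (hyb : y = (b:ZMod 2)) (v : Gp n)
    (hv : v ∈ (zwalk n hn (x,y,(2:ZMod n)) (n-2)).support) :
    ∃ m : ℕ, m < n ∧ (m = 0 ∨ 2 ≤ m) ∧ v = Pc n a b m := by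
  obtain ⟨j, hj, rfl⟩ := mem_zwalk n hn _ _ _ hv
  obtain ⟨m, hm, hcond, he⟩ := tail_coord n hn j hj
  exact ⟨m, hm, hcond, by simp [Pc, Prod.ext_iff, hxa, hyb, he]⟩

lemma coordsPW (n : ℕ) (hn : 3 ≤ n) (i j : Fin 3) (x : Gp n)
    (hx : x ∈ (PW n hn i j).support) :
    ∃ a b m : ℕ, a < 2 ∧ b < 2 ∧ m < n ∧ x = Pc n a b m ∧ C i.1 j.1 a b m := by
  fin_cases i <;> fin_cases j
  · replace hx : x ∈ (PW00 n hn).support := hx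
    rw [PW00, Walk.support_reverse, List.mem_reverse, Walk.support_copy] at hx
    obtain ⟨m, hm, hc, rfl⟩ := coords_tail n hn 0 0 0 0 (by norm_num) (by norm_num) x hx
    exact ⟨0, 0, m, by omega, by omega, hm, rfl, show C 0 0 0 0 m by norm_num [C] <;> omega⟩
  · replace hx : x ∈ (PW01 n).support := hx
    rw [PW01] at hx
    simp only [SimpleGraph.Adj.toWalk, Walk.support_cons, Walk.support_nil, List.mem_cons,
      List.mem_singleton, List.not_mem_nil, or_false] at hx
    rcases hx with rfl|rfl
    · exact ⟨0, 0, 0, by omega, by omega, by omega, by norm_num [Pc, Prod.ext_iff],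
        show C 0 1 0 0 0 by norm_num [C] <;> omega⟩
    · exact ⟨0, 1, 0, by omega, by omega, by omega, by norm_num [Pc, Prod.ext_iff],
        show C 0 1 0 1 0 by norm_num [C] <;> omega⟩
  · replace hx : x ∈ (PW02 n).support := hx
    rw [PW02] at hx
    simp only [SimpleGraph.Adj.toWalk, Walk.support_cons, Walk.support_nil, List.mem_cons,
      List.mem_singleton, List.not_mem_nil, or_false] at hx
    rcases hx with rfl|rfl
    · exact ⟨0, 0, 0, by omega, by omega, by omega, by norm_num [Pc, Prod.ext_iff],
        show C 0 2 0 0 0 by norm_num [C] <;> omega⟩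
    · exact ⟨1, 0, 0, by omega, by omega, by omega, by norm_num [Pc, Prod.ext_iff],
        show C 0 2 1 0 0 by norm_num [C] <;> omega⟩
  · replace hx : x ∈ (PW10 n hn).support := hx
    rw [PW10] at hx
    simp only [SimpleGraph.Adj.toWalk, Walk.support_cons, Walk.support_nil, List.mem_cons,
      List.mem_singleton, List.not_mem_nil, or_false] at hx
    rcases hx with rfl|rfl
    · exact ⟨0, 0, 1, by omega, by omega, by omega, by norm_num [Pc, Prod.ext_iff],
        show C 1 0 0 0 1 by norm_num [C] <;> omega⟩
    · exact ⟨0, 0, 2, by omega, by omega, by omega, by norm_num [Pc, Prod.ext_iff],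
        show C 1 0 0 0 2 by norm_num [C] <;> omega⟩
  · replace hx : x ∈ (PW11 n hn).support := hx
    rw [PW11] at hx
    simp only [SimpleGraph.Adj.toWalk, Walk.support_cons, Walk.support_nil, List.mem_cons,
      List.mem_singleton, List.not_mem_nil, or_false] at hx
    rcases hx with rfl|rfl|rfl|rfl|rfl
    · exact ⟨0, 0, 1, by omega, by omega, by omega, by norm_num [Pc, Prod.ext_iff],
        show C 1 1 0 0 1 by norm_num [C] <;> omega⟩
    · exact ⟨0, 1, 1, by omega, by omega, by omega, by norm_num [Pc, Prod.ext_iff],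
        show C 1 1 0 1 1 by norm_num [C] <;> omega⟩
    · exact ⟨1, 1, 1, by omega, by omega, by omega, by norm_num [Pc, Prod.ext_iff],
        show C 1 1 1 1 1 by norm_num [C] <;> omega⟩
    · exact ⟨1, 1, 0, by omega, by omega, by omega, by norm_num [Pc, Prod.ext_iff],
        show C 1 1 1 1 0 by norm_num [C] <;> omega⟩
    · exact ⟨0, 1, 0, by omega, by omega, by omega, by norm_num [Pc, Prod.ext_iff],
        show C 1 1 0 1 0 by norm_num [C] <;> omega⟩
  · replace hx : x ∈ (PW12 n hn).support := hx
    rw [PW12] at hx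
    simp only [SimpleGraph.Adj.toWalk, Walk.support_cons, Walk.support_nil, List.mem_cons,
      List.mem_singleton, List.not_mem_nil, or_false] at hx
    rcases hx with rfl|rfl|rfl
    · exact ⟨0, 0, 1, by omega, by omega, by omega, by norm_num [Pc, Prod.ext_iff],
        show C 1 2 0 0 1 by norm_num [C] <;> omega⟩
    · exact ⟨1, 0, 1, by omega, by omega, by omega, by norm_num [Pc, Prod.ext_iff],
        show C 1 2 1 0 1 by norm_num [C] <;> omega⟩
    · exact ⟨1, 0, 0, by omega, by omega, by omega, by norm_num [Pc, Prod.ext_iff],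
        show C 1 2 1 0 0 by norm_num [C] <;> omega⟩
  · replace hx : x ∈ (PW20 n).support := hx
    rw [PW20] at hx
    simp only [SimpleGraph.Adj.toWalk, Walk.support_cons, Walk.support_nil, List.mem_cons,
      List.mem_singleton, List.not_mem_nil, or_false] at hx
    rcases hx with rfl|rfl
    · exact ⟨0, 1, 2, by omega, by omega, by omega, by norm_num [Pc, Prod.ext_iff],
        show C 2 0 0 1 2 by norm_num [C] <;> omega⟩
    · exact ⟨0, 0, 2, by omega, by omega, by omega, by norm_num [Pc, Prod.ext_iff],
        show C 2 0 0 0 2 by norm_num [C] <;> omega⟩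
  · replace hx : x ∈ (PW21 n hn).support := hx
    rw [PW21, Walk.support_copy] at hx
    obtain ⟨m, hm, hc, rfl⟩ := coords_tail n hn 0 1 0 1 (by norm_num) (by norm_num) x hx
    exact ⟨0, 1, m, by omega, by omega, hm, rfl, show C 2 1 0 1 m by norm_num [C] <;> omega⟩
  · replace hx : x ∈ (PW22 n hn).support := hx
    rw [PW22, Walk.support_cons, Walk.support_cons, Walk.support_copy] at hx
    simp only [List.mem_cons] at hx
    rcases hx with rfl|rfl|hx
    · exact ⟨0, 1, 2, by omega, by omega, by omega, by norm_num [Pc, Prod.ext_iff],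
        show C 2 2 0 1 2 by norm_num [C] <;> omega⟩
    · exact ⟨1, 1, 2, by omega, by omega, by omega, by norm_num [Pc, Prod.ext_iff],
        show C 2 2 1 1 2 by norm_num [C] <;> omega⟩
    · obtain ⟨m, hm, hc, rfl⟩ := coords_tail n hn 1 0 1 0 (by norm_num) (by norm_num) x hx
      exact ⟨1, 0, m, by omega, by omega, hm, rfl, show C 2 2 1 0 m by norm_num [C] <;> omega⟩

def gval (n : ℕ) (v : Gp n) : ℕ × ℕ × ℕ := (v.1.val, v.2.1.val, v.2.2.val)

def tbl : Fin 3 ⊕ Fin 3 → ℕ × ℕ × ℕ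
  | .inl ⟨0,_⟩ => (0,0,0)
  | .inl ⟨1,_⟩ => (0,0,1)
  | .inl ⟨2,_⟩ => (0,1,2)
  | .inl ⟨_+3,h⟩ => absurd h (by omega)
  | .inr ⟨0,_⟩ => (0,0,2)
  | .inr ⟨1,_⟩ => (0,1,0)
  | .inr ⟨2,_⟩ => (1,0,0)
  | .inr ⟨_+3,h⟩ => absurd h (by omega)

lemma tbl_bounds : ∀ c, (tbl c).1 < 2 ∧ (tbl c).2.1 < 2 ∧ (tbl c).2.2 < 3 := by decide

lemma fB_coords (n : ℕ) (hn : 3 ≤ n) (c : Fin 3 ⊕ Fin 3) :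
    fB n c = Pc n (tbl c).1 (tbl c).2.1 (tbl c).2.2 := by
  rcases c with ⟨cv,hcv⟩|⟨cv,hcv⟩ <;> interval_cases cv <;>
    norm_num [fB, tbl, Pc, Prod.ext_iff]

lemma fB_inj (n : ℕ) (hn : 3 ≤ n) : Function.Injective (fB n) := by
  intro c c' e
  have h : tbl c = tbl c' := by
    have e1 : Pc n (tbl c).1 (tbl c).2.1 (tbl c).2.2
        = Pc n (tbl c').1 (tbl c').2.1 (tbl c').2.2 := by
      rw [← fB_coords n hn, ← fB_coords n hn, e]
    obtain ⟨b1,b2,b3⟩ := tbl_bounds c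
    obtain ⟨b1',b2',b3'⟩ := tbl_bounds c'
    obtain ⟨q1,q2,q3⟩ := Pc_inj n b1 b2 (by omega) b1' b2' (by omega) e1
    exact Prod.ext q1 (Prod.ext q2 q3)
  have key : ∀ c c' : Fin 3 ⊕ Fin 3, tbl c = tbl c' → c = c' := by decide
  exact key c c' h

lemma branch_of (n : ℕ) (hn : 3 ≤ n) (a b m : ℕ)
    (h : (a=0∧b=0∧m ≤ 2)∨(a=0∧b=1∧(m=0∨m=2))∨(a=1∧b=0∧m=0)) :
    ∃ w, Pc n a b m = fB n w := by
  rcases h with ⟨rfl,rfl,hm⟩|⟨rfl,rfl,hm⟩|⟨rfl,rfl,rfl⟩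
  · interval_cases m
    · exact ⟨.inl ⟨0, by omega⟩, by rw [fB_coords n hn]; norm_num [tbl]⟩
    · exact ⟨.inl ⟨1, by omega⟩, by rw [fB_coords n hn]; norm_num [tbl]⟩
    · exact ⟨.inr ⟨0, by omega⟩, by rw [fB_coords n hn]; norm_num [tbl]⟩
  · rcases hm with rfl|rfl
    · exact ⟨.inr ⟨1, by omega⟩, by rw [fB_coords n hn]; norm_num [tbl]⟩
    · exact ⟨.inl ⟨2, by omega⟩, by rw [fB_coords n hn]; norm_num [tbl]⟩
  · exact ⟨.inr ⟨2, by omega⟩, by rw [fB_coords n hn]; norm_num [tbl]⟩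

lemma ckeyN (i j i' j' : ℕ) (hi : i < 3) (hj : j < 3) (hi' : i' < 3) (hj' : j' < 3)
    (hne : ¬(i = i' ∧ j = j')) (a b m : ℕ)
    (h1 : C i j a b m) (h2 : C i' j' a b m) :
    (a=0∧b=0∧m ≤ 2)∨(a=0∧b=1∧(m=0∨m=2))∨(a=1∧b=0∧m=0) := by
  interval_cases i <;> interval_cases j <;> interval_cases i' <;> interval_cases j' <;>
    first
      | (exfalso; apply hne; constructor <;> rfl)
      | (simp [C] at h1 h2 <;> omega)

lemma ckey (i j i' j' : Fin 3) (hne : ¬(i = i' ∧ j = j')) (a b m : ℕ)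
    (h1 : C i.1 j.1 a b m) (h2 : C i'.1 j'.1 a b m) :
    (a=0∧b=0∧m ≤ 2)∨(a=0∧b=1∧(m=0∨m=2))∨(a=1∧b=0∧m=0) :=
  ckeyN i.1 j.1 i'.1 j'.1 i.2 j.2 i'.2 j'.2
    (fun ⟨e1,e2⟩ => hne ⟨Fin.ext e1, Fin.ext e2⟩) a b m h1 h2

lemma core4 (n : ℕ) (hn : 3 ≤ n) (i j i' j' : Fin 3) (hne : ¬(i = i' ∧ j = j')) (x : Gp n)
    (hx1 : x ∈ (PW n hn i j).support) (hx2 : x ∈ (PW n hn i' j').support) :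
    ∃ w, x = fB n w := by
  obtain ⟨a,b,m,ha,hb,hm,rfl,h1⟩ := coordsPW n hn i j x hx1
  obtain ⟨a',b',m',ha',hb',hm',he,h2⟩ := coordsPW n hn i' j' _ hx2
  obtain ⟨rfl,rfl,rfl⟩ := Pc_inj n ha hb hm ha' hb' hm' he
  exact branch_of n hn a b m (ckey i j i' j' hne a b m h1 h2)

lemma concl_l {k : ℕ} (hk : k < 3) (i j : Fin 3) (h : i.1 = k) :
    (Sum.inl ⟨k,hk⟩ : Fin 3 ⊕ Fin 3) = Sum.inl i ∨ (Sum.inl ⟨k,hk⟩ : Fin 3 ⊕ Fin 3) = Sum.inr j :=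
  Or.inl (congrArg Sum.inl (Fin.ext h).symm)

lemma concl_r {k : ℕ} (hk : k < 3) (i j : Fin 3) (h : j.1 = k) :
    (Sum.inr ⟨k,hk⟩ : Fin 3 ⊕ Fin 3) = Sum.inl i ∨ (Sum.inr ⟨k,hk⟩ : Fin 3 ⊕ Fin 3) = Sum.inr j :=
  Or.inr (congrArg Sum.inr (Fin.ext h).symm)

lemma core3 (n : ℕ) (hn : 3 ≤ n) (i j : Fin 3) (c : Fin 3 ⊕ Fin 3)
    (hc : fB n c ∈ (PW n hn i j).support) : c = .inl i ∨ c = .inr j := by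
  obtain ⟨a,b,m,ha,hb,hm,he,hC⟩ := coordsPW n hn i j _ hc
  have e2 : Pc n (tbl c).1 (tbl c).2.1 (tbl c).2.2 = Pc n a b m := by
    rw [← fB_coords n hn c, he]
  obtain ⟨tb1,tb2,tb3⟩ := tbl_bounds c
  obtain ⟨q1,q2,q3⟩ := Pc_inj n tb1 tb2 (by omega) ha hb hm e2
  have hi : i.1 < 3 := i.2
  have hj : j.1 < 3 := j.2
  rcases c with ⟨cv,hcv⟩|⟨cv,hcv⟩ <;> interval_cases cv <;>
    norm_num [tbl] at q1 q2 q3 <;>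
    (try subst q1) <;> (try subst q2) <;> (try subst q3) <;>
    norm_num [C] at hC <;>
    first
      | exact concl_l (by omega) i j (by omega)
      | exact concl_r (by omega) i j (by omega)

lemma isPath_toWalk {n : ℕ} {u v : Gp n} (h : (Γ n).Adj u v) : h.toWalk.IsPath := by
  simp [Walk.isPath_def, SimpleGraph.Adj.toWalk, h.ne]

lemma tcoords (n : ℕ) (hn : 3 ≤ n) (x y : ZMod 2) (a b : ℕ) (hxa : x = (a:ZMod 2))
    (hyb : y = (b:ZMod 2)) :
    ∀ v ∈ (zwalk n hn (x,y,(2:ZMod n)) (n-2)).support, v.1 = (a:ZMod 2) ∧ v.2.1 = (b:ZMod 2) := by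
  intro v hv
  obtain ⟨m,hm,hc,rfl⟩ := coords_tail n hn x y a b hxa hyb v hv
  constructor <;> norm_num [Pc]

lemma isPathPW (n : ℕ) (hn : 3 ≤ n) (i j : Fin 3) : (PW n hn i j).IsPath := by
  have ne' : ∀ a b : ℕ, a < n → b < n → a ≠ b → ((a:ℕ):ZMod n) ≠ ((b:ℕ):ZMod n) :=
    fun a b ha hb hab e => hab (zcast_inj ha hb e)
  have n01 : (0:ZMod n) ≠ 1 := by
    have := ne' 0 1 (by omega) (by omega) (by omega); push_cast at this; exact this
  have n02 : (0:ZMod n) ≠ 2 := by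
    have := ne' 0 2 (by omega) (by omega) (by omega); push_cast at this; exact this
  have n12 : (1:ZMod n) ≠ 2 := by
    have := ne' 1 2 (by omega) (by omega) (by omega); push_cast at this; exact this
  have n10 : (1:ZMod n) ≠ 0 := n01.symm
  have n20 : (2:ZMod n) ≠ 0 := n02.symm
  have n21 : (2:ZMod n) ≠ 1 := n12.symm
  have z2 : (0:ZMod 2) ≠ 1 := by decide
  have z2' : (1:ZMod 2) ≠ 0 := by decide
  fin_cases i <;> fin_cases j
  · show (PW00 n hn).IsPath
    rw [PW00]
    exact ((Walk.isPath_copy _ _ _).mpr (zwalk_isPath n hn _ (n-2) (by omega))).reverse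
  · exact isPath_toWalk _
  · exact isPath_toWalk _
  · exact isPath_toWalk _
  · show (PW11 n hn).IsPath
    rw [PW11, Walk.isPath_def]
    simp [Prod.mk.injEq, n01, n10, n02, n20, n12, n21, z2, z2', -Prod.mk_one_one, -Prod.mk_zero_zero]
  · show (PW12 n hn).IsPath
    rw [PW12, Walk.isPath_def]
    simp [Prod.mk.injEq, n01, n10, n02, n20, n12, n21, z2, z2', -Prod.mk_one_one, -Prod.mk_zero_zero]
  · exact isPath_toWalk _
  · show (PW21 n hn).IsPath
    rw [PW21]
    exact (Walk.isPath_copy _ _ _).mpr (zwalk_isPath n hn _ (n-2) (by omega))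
  · show (PW22 n hn).IsPath
    rw [PW22, Walk.isPath_def, Walk.support_cons, Walk.support_cons, Walk.support_copy]
    have tc := tcoords n hn 1 0 1 0 (by norm_num) (by norm_num)
    refine List.nodup_cons.mpr ⟨?_, List.nodup_cons.mpr ⟨?_, ?_⟩⟩
    · intro hmem
      rcases List.mem_cons.mp hmem with e | h2
      · have e1 := congrArg (fun p : Gp n => p.1) e
        simp at e1
      · have e1 := (tc _ h2).1
        simp at e1
    · intro h2
      have e1 := (tc _ h2).2
      simp at e1
    · exact (Walk.isPath_def _).mp (zwalk_isPath n hn _ (n-2) (by omega))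

def pgen (n : ℕ) (hn : 3 ≤ n) : ∀ {a b : Fin 3 ⊕ Fin 3},
    (completeBipartiteGraph (Fin 3) (Fin 3)).Adj a b → (Γ n).Walk (fB n a) (fB n b)
  | .inl i, .inr j, _ => PW n hn i j
  | .inr j, .inl i, _ => (PW n hn i j).reverse
  | .inl _, .inl _, h => absurd h (by simp)
  | .inr _, .inr _, h => absurd h (by simp)

theorem containsK33 (n : ℕ) (hn : 3 ≤ n) :
    ContainsSubdivision (Γ n) (completeBipartiteGraph (Fin 3) (Fin 3)) := by
  refine ⟨⟨fB n, fB_inj n hn⟩, fun {a b} h => pgen n hn h, ?_, ?_, ?_, ?_⟩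
  · intro a b h
    rcases a with i|i <;> rcases b with j|j
    · exact absurd h (by simp)
    · exact isPathPW n hn i j
    · exact (isPathPW n hn j i).reverse
    · exact absurd h (by simp)
  · intro a b h
    rcases a with i|i <;> rcases b with j|j
    · exact absurd h (by simp)
    · rfl
    · exact (Walk.reverse_reverse _).symm
    · exact absurd h (by simp)
  · intro a b h c hc
    rcases a with i|i <;> rcases b with j|j
    · exact absurd h (by simp)
    · exact core3 n hn i j c hc
    · replace hc : fB n c ∈ (PW n hn j i).reverse.support := hc
      rw [Walk.support_reverse, List.mem_reverse] at hc
      exact (core3 n hn j i c hc).symm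
    · exact absurd h (by simp)
  · intro a b c d h₁ h₂ hs x hx1 hx2
    rcases a with i|i <;> rcases b with j|j
    · exact absurd h₁ (by simp)
    · -- h₁ : inl i - inr j
      rcases c with u|u <;> rcases d with v|v
      · exact absurd h₂ (by simp)
      · exact core4 n hn i j u v
          (fun h' => hs (by obtain ⟨rfl, rfl⟩ := h'; rfl)) x hx1 hx2
      · replace hx2 : x ∈ (PW n hn v u).reverse.support := hx2
        rw [Walk.support_reverse, List.mem_reverse] at hx2
        exact core4 n hn i j v u
          (fun h' => hs (by obtain ⟨rfl, rfl⟩ := h'; exact Sym2.eq_swap)) x hx1 hx2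
      · exact absurd h₂ (by simp)
    · -- h₁ : inr i - inl j
      replace hx1 : x ∈ (PW n hn j i).reverse.support := hx1
      rw [Walk.support_reverse, List.mem_reverse] at hx1
      rcases c with u|u <;> rcases d with v|v
      · exact absurd h₂ (by simp)
      · exact core4 n hn j i u v
          (fun h' => hs (by obtain ⟨rfl, rfl⟩ := h'; exact Sym2.eq_swap)) x hx1 hx2
      · replace hx2 : x ∈ (PW n hn v u).reverse.support := hx2
        rw [Walk.support_reverse, List.mem_reverse] at hx2
        exact core4 n hn j i v u
          (fun h' => hs (by obtain ⟨rfl, rfl⟩ := h'; rfl)) x hx1 hx2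
      · exact absurd h₂ (by simp)
    · exact absurd h₁ (by simp)

end St7


/-- The Cayley graph of `ℤ/2 × ℤ/2 × ℤ/n` (`n ≥ 3`, the graph product over a triangle) with
respect to `{(1,0,0), (0,1,0), (0,0,1)}` contains a subdivision of `K₃,₃`, hence is
non-planar. -/
theorem stmt_7 (n : ℕ) (hn : 3 ≤ n) :
    ContainsSubdivision
      (cayleyGraphAdd (ZMod 2 × ZMod 2 × ZMod n) {(1, 0, 0), (0, 1, 0), (0, 0, 1)})
      (completeBipartiteGraph (Fin 3) (Fin 3)) ∧
    ¬ IsPlanar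
      (cayleyGraphAdd (ZMod 2 × ZMod 2 × ZMod n) {(1, 0, 0), (0, 1, 0), (0, 0, 1)}) := by
  refine ⟨St7.containsK33 n hn, fun hp => hp.2 (St7.containsK33 n hn)⟩
end

section
/- Let G₁ and G₂ be groups with generating sets S₁, S₂ whose Cayley graphs are planar. Then the Cayley graph of the free product G₁ * G₂ with respect to the generating set S₁ ⊔ S₂ is planar. -/
open scoped commutatorElement

section FPPlanarAux
open Monoid
namespace FPPlanar



variable {G₁ G₂ : Type} [Group G₁] [Group G₂]

/-- Bool-indexed family for the binary coproduct. -/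
def facFam (G₁ G₂ : Type) : Bool → Type := fun b => cond b G₁ G₂

instance facFamGroup : ∀ b, Group (facFam G₁ G₂ b)
  | true => ‹Group G₁›
  | false => ‹Group G₂›

/-- The canonical hom to the indexed coproduct. -/
noncomputable def toCoprodI : Coprod G₁ G₂ →* CoprodI (facFam G₁ G₂) :=
  Coprod.lift (CoprodI.of (M := facFam G₁ G₂) (i := true))
    (CoprodI.of (M := facFam G₁ G₂) (i := false))

def fromFn (G₁ G₂ : Type) [Group G₁] [Group G₂] :
    (b : Bool) → facFam G₁ G₂ b →* Coprod G₁ G₂ := fun b => match b with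
  | true => Coprod.inl
  | false => Coprod.inr

noncomputable def fromCoprodI : CoprodI (facFam G₁ G₂) →* Coprod G₁ G₂ :=
  CoprodI.lift (fromFn G₁ G₂)

lemma from_to : (fromCoprodI (G₁ := G₁) (G₂ := G₂)).comp toCoprodI = MonoidHom.id _ := by
  refine Coprod.hom_ext ?_ ?_ <;> ext x
  · show fromCoprodI (toCoprodI (Coprod.inl x)) = Coprod.inl x
    rw [show toCoprodI (Coprod.inl x) = CoprodI.of (M := facFam G₁ G₂) (i := true) x from
      Coprod.lift_apply_inl _ _ x]
    exact CoprodI.lift_of (fromFn G₁ G₂) (i := true) x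
  · show fromCoprodI (toCoprodI (Coprod.inr x)) = Coprod.inr x
    rw [show toCoprodI (Coprod.inr x) = CoprodI.of (M := facFam G₁ G₂) (i := false) x from
      Coprod.lift_apply_inr _ _ x]
    exact CoprodI.lift_of (fromFn G₁ G₂) (i := false) x

lemma toCoprodI_injective : Function.Injective (toCoprodI (G₁ := G₁) (G₂ := G₂)) := by
  intro x y h
  have h1 : ∀ z : Coprod G₁ G₂, fromCoprodI (toCoprodI z) = z := by
    intro z
    exact DFunLike.congr_fun (from_to (G₁ := G₁) (G₂ := G₂)) z
  rw [← h1 x, ← h1 y, h]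

/-- `A` : image of `G₁`. -/
def sgA (G₁ G₂ : Type) [Group G₁] [Group G₂] : Subgroup (Coprod G₁ G₂) :=
  (Coprod.inl : G₁ →* Coprod G₁ G₂).range

def sgB (G₁ G₂ : Type) [Group G₁] [Group G₂] : Subgroup (Coprod G₁ G₂) :=
  (Coprod.inr : G₂ →* Coprod G₁ G₂).range

lemma eq_one_of_mem_A_mem_B {x : Coprod G₁ G₂} (hA : x ∈ sgA G₁ G₂) (hB : x ∈ sgB G₁ G₂) :
    x = 1 := by
  obtain ⟨a, rfl⟩ := hA
  obtain ⟨b, hb⟩ := hB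
  have h1 : a = 1 := by
    have := congrArg (Coprod.fst) hb
    simpa using this.symm
  simp [h1]

lemma toCoprodI_of_mem_A {x : Coprod G₁ G₂} (hA : x ∈ sgA G₁ G₂) :
    toCoprodI x = CoprodI.of (M := facFam G₁ G₂) (i := true) (Coprod.fst x) := by
  obtain ⟨a, rfl⟩ := hA
  rfl

lemma toCoprodI_of_mem_B {x : Coprod G₁ G₂} (hB : x ∈ sgB G₁ G₂) :
    toCoprodI x = CoprodI.of (M := facFam G₁ G₂) (i := false) (Coprod.snd x) := by
  obtain ⟨b, rfl⟩ := hB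
  rfl

lemma fst_ne_one_of_ne_one {x : Coprod G₁ G₂} (hA : x ∈ sgA G₁ G₂) (hx : x ≠ 1) :
    Coprod.fst x ≠ 1 := by
  obtain ⟨a, rfl⟩ := hA
  intro h
  apply hx
  have : a = 1 := by simpa using h
  simp [this]

lemma snd_ne_one_of_ne_one {x : Coprod G₁ G₂} (hB : x ∈ sgB G₁ G₂) (hx : x ≠ 1) :
    Coprod.snd x ≠ 1 := by
  obtain ⟨b, rfl⟩ := hB
  intro h
  apply hx
  have : b = 1 := by simpa using h
  simp [this]

lemma chain'_imp_of_mem {α : Type*} {R S : α → α → Prop} :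
    ∀ (l : List α), (∀ x ∈ l, ∀ y ∈ l, R x y → S x y) → l.Chain' R → l.Chain' S
  | [], _, _ => List.isChain_nil
  | [_], _, _ => List.isChain_singleton _
  | a :: b :: l, h, hc => by
      rw [List.Chain', List.isChain_cons_cons] at hc ⊢
      refine ⟨h a (by simp) b (by simp) hc.1, chain'_imp_of_mem (b :: l) ?_ hc.2⟩
      intro x hx y hy
      exact h x (List.mem_cons_of_mem a hx) y (List.mem_cons_of_mem a hy)

open Classical in
/-- The key normal-form consequence: a nonempty alternating product of nontrivial
elements of the two factors is nontrivial. -/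
lemma alternating_prod_ne_one (l : List (Coprod G₁ G₂)) (hne : l ≠ [])
    (hmem : ∀ y ∈ l, y ≠ 1 ∧ (y ∈ sgA G₁ G₂ ∨ y ∈ sgB G₁ G₂))
    (hch : l.Chain' (fun y y' => ¬(y ∈ sgA G₁ G₂ ∧ y' ∈ sgA G₁ G₂) ∧
      ¬(y ∈ sgB G₁ G₂ ∧ y' ∈ sgB G₁ G₂))) :
    l.prod ≠ 1 := by
  classical
  intro hprod
  set letter : Coprod G₁ G₂ → (Σ b, facFam G₁ G₂ b) := fun y =>
    if y ∈ sgA G₁ G₂ then ⟨true, Coprod.fst y⟩ else ⟨false, Coprod.snd y⟩ with hletter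
  have hpos : ∀ y, y ∈ sgA G₁ G₂ → letter y = ⟨true, Coprod.fst y⟩ := by
    intro y h; rw [hletter]; exact if_pos h
  have hneg : ∀ y, y ∉ sgA G₁ G₂ → letter y = ⟨false, Coprod.snd y⟩ := by
    intro y h; rw [hletter]; exact if_neg h
  have hofletter : ∀ y ∈ l, CoprodI.of (letter y).2 = toCoprodI y := by
    intro y hy
    by_cases h : y ∈ sgA G₁ G₂
    · rw [hpos y h]; exact (toCoprodI_of_mem_A h).symm
    · have hB : y ∈ sgB G₁ G₂ := ((hmem y hy).2).resolve_left h
      rw [hneg y h]; exact (toCoprodI_of_mem_B hB).symm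
  have hw : ∃ w : CoprodI.Word (facFam G₁ G₂), w.toList = l.map letter := by
    refine ⟨⟨l.map letter, ?_, ?_⟩, rfl⟩
    · intro s hs
      obtain ⟨y, hy, rfl⟩ := List.mem_map.1 hs
      by_cases h : y ∈ sgA G₁ G₂
      · rw [hpos y h]
        exact fst_ne_one_of_ne_one h (hmem y hy).1
      · have hB : y ∈ sgB G₁ G₂ := ((hmem y hy).2).resolve_left h
        rw [hneg y h]
        exact snd_ne_one_of_ne_one hB (hmem y hy).1
    · rw [List.isChain_map]
      refine chain'_imp_of_mem l ?_ hch
      intro y hy y' hy' hrel hfst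
      by_cases h : y ∈ sgA G₁ G₂
      · by_cases h' : y' ∈ sgA G₁ G₂
        · exact hrel.1 ⟨h, h'⟩
        · rw [hpos y h, hneg y' h'] at hfst
          simp at hfst
      · have hB : y ∈ sgB G₁ G₂ := ((hmem y hy).2).resolve_left h
        by_cases h' : y' ∈ sgA G₁ G₂
        · rw [hneg y h, hpos y' h'] at hfst
          simp at hfst
        · have hB' : y' ∈ sgB G₁ G₂ := ((hmem y' hy').2).resolve_left h'
          exact hrel.2 ⟨hB, hB'⟩
  obtain ⟨w, hwl⟩ := hw
  have hwprod : w.prod = 1 := by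
    rw [CoprodI.Word.prod, hwl, List.map_map]
    have heq : (l.map ((fun (s : Σ b, facFam G₁ G₂ b) => CoprodI.of s.2) ∘ letter)).prod
        = (l.map toCoprodI).prod := by
      congr 1
      apply List.map_congr_left
      intro y hy
      exact hofletter y hy
    rw [heq, ← map_list_prod toCoprodI, hprod, map_one]
  have hinj : Function.Injective (CoprodI.Word.prod (M := facFam G₁ G₂)) := by
    intro w1 w2 h
    exact (CoprodI.Word.equiv (M := facFam G₁ G₂)).symm.injective h
  have hempty : w = CoprodI.Word.empty := by
    apply hinj
    rw [hwprod, CoprodI.Word.prod_empty]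
  rw [hempty] at hwl
  have : l.map letter ≠ [] := by simpa using hne
  exact this hwl.symm

variable {G₁ G₂ : Type} [Group G₁] [Group G₂]

lemma chain'_head_eq {α β : Type*} (f : α → β) :
    ∀ (l : List α) (a : α), (a :: l).Chain' (fun x y => f x = f y) →
      ∀ x ∈ a :: l, f a = f x := by
  intro l
  induction l with
  | nil => intro a _ x hx; rw [List.mem_singleton.1 hx]
  | cons b l ih =>
    intro a hc x hx
    rw [List.Chain', List.isChain_cons_cons] at hc
    rcases List.mem_cons.1 hx with rfl | hx
    · rfl
    · exact hc.1.trans (ih b hc.2 x hx)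

lemma chain'_const {α β : Type*} (f : α → β) (l : List α)
    (hc : l.Chain' (fun x y => f x = f y)) :
    ∀ x ∈ l, ∀ y ∈ l, f x = f y := by
  intro x hx y hy
  cases l with
  | nil => simp at hx
  | cons a l => exact (chain'_head_eq f l a hc x hx).symm.trans (chain'_head_eq f l a hc y hy)

open Classical in
/-- If a product of letters from the two factors is `1` and no proper nonempty
infix has product `1`, then the letters all come from a single factor. -/
lemma letters_one_factor (t : List (Coprod G₁ G₂))
    (hmem : ∀ s ∈ t, s ≠ 1 ∧ (s ∈ sgA G₁ G₂ ∨ s ∈ sgB G₁ G₂))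
    (hprod : t.prod = 1)
    (hinfix : ∀ l₁ l₂ l₃ : List (Coprod G₁ G₂), t = l₁ ++ l₂ ++ l₃ → l₂ ≠ [] →
      (l₁ ≠ [] ∨ l₃ ≠ []) → l₂.prod ≠ 1) :
    (∀ s ∈ t, s ∈ sgA G₁ G₂) ∨ (∀ s ∈ t, s ∈ sgB G₁ G₂) := by
  classical
  by_contra hcon
  push_neg at hcon
  obtain ⟨⟨s₁, hs₁t, hs₁A⟩, ⟨s₂, hs₂t, hs₂B⟩⟩ := hcon
  set lab : Coprod G₁ G₂ → Bool := fun x => decide (x ∈ sgA G₁ G₂) with hlab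
  set r : Coprod G₁ G₂ → Coprod G₁ G₂ → Bool := fun x y => lab x == lab y with hr
  set C := t.splitBy r with hC
  have hflat : C.flatten = t := List.flatten_splitBy r t
  have hnil : ∀ m ∈ C, m ≠ [] := fun m hm => List.ne_nil_of_mem_splitBy hm
  have hmemC : ∀ m ∈ C, ∀ x ∈ m, x ∈ t := by
    intro m hm x hx
    rw [← hflat]
    exact List.mem_flatten.2 ⟨m, hm, hx⟩
  -- labels are constant on each chunk
  have hconst : ∀ m ∈ C, ∀ x ∈ m, ∀ y ∈ m, lab x = lab y := by
    intro m hm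
    apply chain'_const lab m
    have := List.isChain_of_mem_splitBy hm
    refine this.imp ?_
    intro x y hxy
    rw [hr] at hxy
    simpa using hxy
  -- each chunk is a proper infix if there are at least two chunks
  have hCsplit : ∀ m ∈ C, ∃ C₁ C₂ : List (List (Coprod G₁ G₂)),
      C = C₁ ++ m :: C₂ := by
    intro m hm
    obtain ⟨C₁, C₂, h⟩ := List.append_of_mem hm
    exact ⟨C₁, C₂, h⟩
  have hflatne : ∀ D : List (List (Coprod G₁ G₂)), (∀ m ∈ D, m ≠ []) → D ≠ [] →
      D.flatten ≠ [] := by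
    intro D hD hne
    cases D with
    | nil => exact absurd rfl hne
    | cons m D =>
      rw [List.flatten_cons]
      intro h
      exact hD m (by simp) (List.append_eq_nil_iff.1 h).1
  -- at least two chunks
  have htwo : 2 ≤ C.length := by
    by_contra hlen
    push_neg at hlen
    interval_cases h : C.length
    · have : t = [] := by rw [← hflat, List.length_eq_zero_iff.1 h]; rfl
      rw [this] at hs₁t; simp at hs₁t
    · obtain ⟨m, hm⟩ := List.length_eq_one_iff.1 h
      have ht : t = m := by rw [← hflat, hm, List.flatten_cons, List.flatten_nil, List.append_nil]
      have h12 : lab s₂ = lab s₁ := by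
        apply hconst m (by simp [hm]) <;> rw [← ht] <;> assumption
      have h1 : lab s₁ = false := by
        simp [hlab, hs₁A]
      have h2 : lab s₂ = true := by
        have : s₂ ∈ sgA G₁ G₂ := ((hmem s₂ hs₂t).2).resolve_right hs₂B
        simp [hlab, this]
      rw [h1, h2] at h12; exact Bool.noConfusion h12
  -- chunk products are nontrivial
  have hprodne : ∀ m ∈ C, m.prod ≠ 1 := by
    intro m hm
    obtain ⟨C₁, C₂, hsplit⟩ := hCsplit m hm
    refine hinfix C₁.flatten m C₂.flatten ?_ (hnil m hm) ?_
    · rw [← hflat, hsplit]; simp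
    · rcases C₁ with _ | ⟨c, C₁⟩
      · right
        rcases C₂ with _ | ⟨c, C₂⟩
        · exfalso; rw [hsplit] at htwo; simp at htwo
        · apply hflatne
          · intro m' hm'
            refine hnil m' ?_
            rw [hsplit]; simp at hm' ⊢; tauto
          · simp
      · left
        apply hflatne
        · intro m' hm'
          refine hnil m' ?_
          rw [hsplit]; simp at hm' ⊢; tauto
        · simp
  -- chunk products lie in a single factor, depending on the label
  have hside : ∀ m ∈ C, ∀ x ∈ m,
      (lab x = true → m.prod ∈ sgA G₁ G₂) ∧ (lab x = false → m.prod ∈ sgB G₁ G₂) := by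
    intro m hm x hx
    constructor
    · intro hl
      apply Subgroup.list_prod_mem
      intro y hy
      have : lab y = true := (hconst m hm x hx y hy) ▸ hl
      simpa [hlab] using this
    · intro hl
      apply Subgroup.list_prod_mem
      intro y hy
      have hlaby : lab y = false := (hconst m hm x hx y hy) ▸ hl
      have hyA : y ∉ sgA G₁ G₂ := by simpa [hlab] using hlaby
      exact ((hmem y (hmemC m hm y hy)).2).resolve_left hyA
  -- the labels determine side of product, conversely
  have hside' : ∀ m ∈ C, (m.prod ∈ sgA G₁ G₂ → ∀ x ∈ m, lab x = true) ∧
      (m.prod ∈ sgB G₁ G₂ → ∀ x ∈ m, lab x = false) := by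
    intro m hm
    obtain ⟨x, hx⟩ := List.exists_mem_of_ne_nil m (hnil m hm)
    constructor
    · intro hpA y hy
      cases hl : lab x with
      | false =>
        have hB : m.prod ∈ sgB G₁ G₂ := (hside m hm x hx).2 hl
        exact absurd (eq_one_of_mem_A_mem_B hpA hB) (hprodne m hm)
      | true => exact (hconst m hm x hx y hy) ▸ hl
    · intro hpB y hy
      cases hl : lab x with
      | true =>
        have hA : m.prod ∈ sgA G₁ G₂ := (hside m hm x hx).1 hl
        exact absurd (eq_one_of_mem_A_mem_B hA hpB) (hprodne m hm)
      | false => exact (hconst m hm x hx y hy) ▸ hl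
  -- now build the alternating word of chunk products
  have halt := alternating_prod_ne_one (G₁ := G₁) (G₂ := G₂) (C.map List.prod) ?_ ?_ ?_
  · apply halt
    rw [← List.prod_flatten, hflat, hprod]
  · intro h
    have : C = [] := by simpa using h
    rw [this] at htwo; simp at htwo
  · intro y hy
    obtain ⟨m, hm, rfl⟩ := List.mem_map.1 hy
    refine ⟨hprodne m hm, ?_⟩
    obtain ⟨x, hx⟩ := List.exists_mem_of_ne_nil m (hnil m hm)
    cases hl : lab x with
    | true => exact Or.inl ((hside m hm x hx).1 hl)
    | false => exact Or.inr ((hside m hm x hx).2 hl)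
  · rw [List.Chain', List.isChain_map]
    have hch := List.isChain_getLast_head_splitBy r t
    rw [← hC] at hch
    refine chain'_imp_of_mem C ?_ hch
    rintro m hm m' hm' ⟨hne, hne', hrel⟩
    constructor
    · rintro ⟨hpA, hpA'⟩
      have h1 : lab (m.getLast hne) = true := (hside' m hm).1 hpA _ (List.getLast_mem hne)
      have h2 : lab (m'.head hne') = true := (hside' m' hm').1 hpA' _ (List.head_mem hne')
      rw [hr] at hrel
      simp only [h1, h2] at hrel
      simp at hrel
    · rintro ⟨hpB, hpB'⟩
      have h1 : lab (m.getLast hne) = false := (hside' m hm).2 hpB _ (List.getLast_mem hne)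
      have h2 : lab (m'.head hne') = false := (hside' m' hm').2 hpB' _ (List.head_mem hne')
      rw [hr] at hrel
      simp only [h1, h2] at hrel
      simp at hrel

section Letters
variable {H : Type} [Group H] {Γ : SimpleGraph H}

/-- The group elements labelling the steps of a walk in a graph on a group. -/
def walkLetters : ∀ {x y : H}, Γ.Walk x y → List H
  | _, _, .nil => []
  | x, _, .cons (v := x') _ p => (x⁻¹ * x') :: walkLetters p

@[simp] lemma walkLetters_nil {x : H} : walkLetters (.nil : Γ.Walk x x) = [] := rfl

@[simp] lemma walkLetters_cons {x x' y : H} (h : Γ.Adj x x') (p : Γ.Walk x' y) :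
    walkLetters (.cons h p) = (x⁻¹ * x') :: walkLetters p := rfl

lemma walkLetters_prod {x y : H} (p : Γ.Walk x y) : x * (walkLetters p).prod = y := by
  induction p with
  | nil => simp
  | cons h p ih => simpa [mul_assoc] using ih

lemma walkLetters_mem {x y : H} (p : Γ.Walk x y) :
    ∀ t ∈ walkLetters p, ∃ u v, Γ.Adj u v ∧ t = u⁻¹ * v := by
  induction p with
  | nil => simp
  | cons h p ih =>
    intro t ht
    rcases List.mem_cons.1 ht with rfl | ht
    · exact ⟨_, _, h, rfl⟩
    · exact ih t ht

lemma support_eq_inits {x y : H} (p : Γ.Walk x y) :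
    p.support = (walkLetters p).inits.map (fun l => x * l.prod) := by
  induction p with
  | nil => simp
  | cons h p ih =>
    rw [SimpleGraph.Walk.support_cons, walkLetters_cons, List.inits_cons, List.map_cons,
      List.map_map, ih]
    congr 1
    · simp
    · apply List.map_congr_left
      intro l _
      simp [mul_assoc]

end Letters

section Coset
variable (G₁ G₂ : Type) [Group G₁] [Group G₂] (S₁ : Set G₁) (S₂ : Set G₂)

/-- The Cayley graph of the free product w.r.t. the union of images of generators. -/
abbrev bigGamma : SimpleGraph (Coprod G₁ G₂) :=
  SimpleGraph.fromRel (fun g h => ∃ s ∈ (⇑Coprod.inl '' S₁ ∪ ⇑Coprod.inr '' S₂ : Set _),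
    h = g * s)

variable {G₁ G₂ S₁ S₂}

lemma step_mem_of_adj {x y : Coprod G₁ G₂} (h : (bigGamma G₁ G₂ S₁ S₂).Adj x y) :
    x⁻¹ * y ≠ 1 ∧ (x⁻¹ * y ∈ sgA G₁ G₂ ∨ x⁻¹ * y ∈ sgB G₁ G₂) := by
  rw [SimpleGraph.fromRel_adj] at h
  obtain ⟨hne, hrel⟩ := h
  refine ⟨fun h1 => hne (inv_mul_eq_one.1 h1), ?_⟩
  rcases hrel with ⟨s, hs, rfl⟩ | ⟨s, hs, hx⟩
  · have heq : x⁻¹ * (x * s) = s := by group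
    rw [heq]
    rcases hs with ⟨a, _, rfl⟩ | ⟨b, _, rfl⟩
    · exact Or.inl ⟨a, rfl⟩
    · exact Or.inr ⟨b, rfl⟩
  · have heq : x⁻¹ * y = s⁻¹ := by rw [hx]; group
    rw [heq]
    rcases hs with ⟨a, _, rfl⟩ | ⟨b, _, rfl⟩
    · exact Or.inl (Subgroup.inv_mem _ ⟨a, rfl⟩)
    · exact Or.inr (Subgroup.inv_mem _ ⟨b, rfl⟩)

/-- A closed walk with no repeated interior vertices lies in a single coset. -/
lemma cycle_in_coset {x : Coprod G₁ G₂} (p : (bigGamma G₁ G₂ S₁ S₂).Walk x x)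
    (hnodup : p.support.tail.Nodup) :
    (∀ v ∈ p.support, x⁻¹ * v ∈ sgA G₁ G₂) ∨ (∀ v ∈ p.support, x⁻¹ * v ∈ sgB G₁ G₂) := by
  classical
  set t := walkLetters p with ht
  have hprod : t.prod = 1 := by
    have h0 := walkLetters_prod p
    rw [← ht] at h0
    exact mul_left_cancel (by rw [h0, mul_one])
  have hmem : ∀ s ∈ t, s ≠ 1 ∧ (s ∈ sgA G₁ G₂ ∨ s ∈ sgB G₁ G₂) := by
    intro s hs
    obtain ⟨u, v, hadj, rfl⟩ := walkLetters_mem p s (ht ▸ hs)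
    exact ⟨(step_mem_of_adj hadj).1, (step_mem_of_adj hadj).2⟩
  have hlen : p.support.length = t.length + 1 := by
    rw [support_eq_inits, List.length_map, List.length_inits]
  have hentry : ∀ (k : ℕ) (hk : k < p.support.length),
      p.support[k] = x * (t.take k).prod := by
    intro k hk
    simp only [support_eq_inits p, List.getElem_map, List.getElem_inits]; rfl
  set n := t.length with hn
  have htaillen : p.support.tail.length = n := by
    rw [List.length_tail, hlen]; omega
  have htail : ∀ (k : ℕ) (hk : k < n),
      p.support.tail[k]'(by rw [htaillen]; exact hk) = x * (t.take (k+1)).prod := by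
    intro k hk
    obtain ⟨l, hl⟩ : ∃ l, p.support = x :: l := ⟨p.support.tail, p.support_eq_cons⟩
    have h2 : p.support[k+1]'(by rw [hlen]; omega) = p.support.tail[k]'(by
        rw [htaillen]; exact hk) := by
      simp only [hl, List.getElem_cons_succ, List.tail_cons]
    rw [← h2, hentry (k+1) (by rw [hlen]; omega)]
  have hinfix : ∀ l₁ l₂ l₃ : List (Coprod G₁ G₂), t = l₁ ++ l₂ ++ l₃ → l₂ ≠ [] →
      (l₁ ≠ [] ∨ l₃ ≠ []) → l₂.prod ≠ 1 := by
    intro l₁ l₂ l₃ hsplit hne hproper hone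
    set i := l₁.length with hi
    set j := l₁.length + l₂.length with hj
    have hl₂pos : 0 < l₂.length := List.length_pos_iff.2 hne
    have hjn : j ≤ n := by rw [hn, hsplit]; simp [hj]
    have htake_i : t.take i = l₁ := by
      rw [hsplit, List.append_assoc, hi, List.take_left]
    have htake_j : t.take j = l₁ ++ l₂ := by
      have : j = (l₁ ++ l₂).length := by simp [hj]
      rw [hsplit, this, List.take_left]
    have hij : i < j := by omega
    rcases Nat.eq_zero_or_pos i with hi0 | hipos
    · have hl₁ : l₁ = [] := List.length_eq_zero_iff.1 hi0
      have hl₃ : l₃ ≠ [] := hproper.resolve_left (by simp [hl₁])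
      have hjlt : j < n := by
        have hn2 : n = j + l₃.length := by rw [hn, hsplit]; simp [hj]; omega
        have := List.length_pos_iff.2 hl₃
        omega
      have hj1 : 1 ≤ j := by omega
      have hv1 : p.support.tail[j-1]'(by rw [htaillen]; omega) = x := by
        rw [htail (j-1) (by omega)]
        have hjj : j - 1 + 1 = j := by omega
        rw [hjj, htake_j, hl₁, List.nil_append, hone, mul_one]
      have hv2 : p.support.tail[n-1]'(by rw [htaillen]; omega) = x := by
        rw [htail (n-1) (by omega)]
        have hnn : n - 1 + 1 = n := by omega
        rw [hnn, hn, List.take_length, hprod, mul_one]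
      have := (List.Nodup.getElem_inj_iff hnodup).1 (hv1.trans hv2.symm)
      omega
    · have hv1 : p.support.tail[i-1]'(by rw [htaillen]; omega) = x * (t.take i).prod := by
        rw [htail (i-1) (by omega)]
        have hii : i - 1 + 1 = i := by omega
        rw [hii]
      have hv2 : p.support.tail[j-1]'(by rw [htaillen]; omega) = x * (t.take i).prod := by
        rw [htail (j-1) (by omega)]
        have hjj : j - 1 + 1 = j := by omega
        rw [hjj, htake_j, htake_i, List.prod_append, hone, mul_one]
      have := (List.Nodup.getElem_inj_iff hnodup).1 (hv1.trans hv2.symm)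
      omega
  have hfac := letters_one_factor t hmem hprod hinfix
  refine hfac.imp ?_ ?_ <;> intro hall v hv <;>
  · rw [support_eq_inits] at hv
    obtain ⟨l, hl, rfl⟩ := List.mem_map.1 hv
    rw [List.mem_inits] at hl
    have hsub : ∀ s ∈ l, s ∈ t := fun s hs => hl.subset hs
    have hx : x⁻¹ * (x * l.prod) = l.prod := by group
    rw [hx]
    exact Subgroup.list_prod_mem _ (fun s hs => hall s (hsub s hs))

end Coset
section Pull
variable {V U : Type} {Γ : SimpleGraph V} {Δ : SimpleGraph U} {ρ : U → V} {σ : V → U}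

variable (hrefl : ∀ a b : U, Γ.Adj (ρ a) (ρ b) → Δ.Adj a b)

/-- Pull a walk back along a vertex map that reflects adjacency. -/
def pullWalk : ∀ {x y : V} (q : Γ.Walk x y), (∀ z ∈ q.support, ρ (σ z) = z) → Δ.Walk (σ x) (σ y)
  | _, _, .nil, _ => .nil
  | x, _, .cons (v := x') h q, hq =>
    .cons (hrefl _ _ (by
      rw [hq x (by simp), hq x' (by simp [SimpleGraph.Walk.start_mem_support])]
      exact h))
      (pullWalk q (fun z hz => hq z (by simp [hz])))

lemma pullWalk_nil {x : V} (hq) :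
    pullWalk (σ := σ) hrefl (.nil : Γ.Walk x x) hq = .nil := rfl

lemma pullWalk_cons {x x' y : V} (h : Γ.Adj x x') (q : Γ.Walk x' y) (hq) :
    pullWalk (σ := σ) hrefl (.cons h q) hq =
      .cons (hrefl _ _ (by
        rw [hq x (by simp), hq x' (by simp [SimpleGraph.Walk.start_mem_support])]
        exact h)) (pullWalk hrefl q (fun z hz => hq z (by simp [hz]))) := rfl

lemma pullWalk_support {x y : V} (q : Γ.Walk x y) (hq) :
    (pullWalk (σ := σ) hrefl q hq).support.map ρ = q.support := by
  induction q with
  | nil =>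
    rw [pullWalk_nil]
    simp only [SimpleGraph.Walk.support_nil, List.map_cons, List.map_nil]
    rw [hq _ (by simp)]
  | cons h q ih =>
    rw [pullWalk_cons]
    simp only [SimpleGraph.Walk.support_cons, List.map_cons]
    rw [ih, hq _ (by simp)]

lemma pullWalk_append {x y z : V} (q : Γ.Walk x y) (r : Γ.Walk y z) (hqr hq hr) :
    pullWalk (σ := σ) hrefl (q.append r) hqr =
      (pullWalk hrefl q hq).append (pullWalk hrefl r hr) := by
  induction q with
  | nil => rfl
  | cons h q ih => exact congrArg (SimpleGraph.Walk.cons _) (ih r _ _ hr)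

lemma pullWalk_congr {x y : V} (q q' : Γ.Walk x y) (heq : q = q') (hq hq') :
    pullWalk (σ := σ) hrefl q hq = pullWalk hrefl q' hq' := by
  subst heq; rfl

lemma pullWalk_reverse {x y : V} (q : Γ.Walk x y) (hq hq') :
    pullWalk (σ := σ) hrefl q.reverse hq' = (pullWalk hrefl q hq).reverse := by
  induction q with
  | nil => rfl
  | cons h q ih =>
    have e : (SimpleGraph.Walk.cons h q).reverse
        = q.reverse.append (SimpleGraph.Walk.cons h.symm .nil) :=
      SimpleGraph.Walk.reverse_cons h q
    rw [pullWalk_congr hrefl _ _ e hq' (fun z hz => hq' z (by rw [e]; exact hz))]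
    rw [pullWalk_append hrefl q.reverse (SimpleGraph.Walk.cons h.symm .nil)
      _ (fun z hz => hq z (by
        simp only [SimpleGraph.Walk.support_reverse, List.mem_reverse] at hz
        simp [hz]))
      (fun z hz => hq z (by
        simp only [SimpleGraph.Walk.support_cons, SimpleGraph.Walk.support_nil,
          List.mem_cons, List.mem_singleton] at hz
        rcases hz with rfl | rfl | h0
        · rw [SimpleGraph.Walk.support_cons]
          exact List.mem_cons_of_mem _ q.start_mem_support
        · rw [SimpleGraph.Walk.support_cons]
          exact List.mem_cons_self
        · cases h0))]
    rw [show pullWalk (σ := σ) hrefl (SimpleGraph.Walk.cons h q) hq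
      = SimpleGraph.Walk.cons (hrefl _ _ (by
          rw [hq _ (by simp), hq _ (by simp [SimpleGraph.Walk.start_mem_support])]
          exact h)) (pullWalk hrefl q (fun z hz => hq z (by simp [hz]))) from rfl]
    rw [SimpleGraph.Walk.reverse_cons]
    exact congrArg₂ SimpleGraph.Walk.append (ih _ _) rfl

end Pull
open Classical in
/-- Transfer a subdivision along an injective map that reflects adjacency and whose
range contains all the paths. -/
lemma subdivision_transfer {V U W : Type} {Γ : SimpleGraph V} {Δ : SimpleGraph U}
    {K : SimpleGraph W}
    (hU : Nonempty U) (ρ : U → V) (hinj : Function.Injective ρ)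
    (hrefl : ∀ a b : U, Γ.Adj (ρ a) (ρ b) → Δ.Adj a b)
    (f : W ↪ V)
    (p : ∀ {a b : W}, K.Adj a b → Γ.Walk (f a) (f b))
    (hpath : ∀ {a b} (h : K.Adj a b), (p h).IsPath)
    (hsymm : ∀ {a b} (h : K.Adj a b), p h.symm = (p h).reverse)
    (hbranch : ∀ {a b} (h : K.Adj a b) (c : W), f c ∈ (p h).support → c = a ∨ c = b)
    (hdisj : ∀ {a b c d} (h₁ : K.Adj a b) (h₂ : K.Adj c d), s(a,b) ≠ s(c,d) →
      ∀ x, x ∈ (p h₁).support → x ∈ (p h₂).support → ∃ w, x = f w)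
    (hrange : ∀ {a b} (h : K.Adj a b), ∀ z ∈ (p h).support, z ∈ Set.range ρ)
    (hWedge : ∀ w : W, ∃ w', K.Adj w w') :
    ContainsSubdivision Δ K := by
  classical
  set σ : V → U := fun x => if h : ∃ a, ρ a = x then h.choose else hU.some with hσdef
  have hσ : ∀ x, x ∈ Set.range ρ → ρ (σ x) = x := by
    intro x hx
    obtain ⟨a, ha⟩ := hx
    rw [hσdef]
    have hex : ∃ a, ρ a = x := ⟨a, ha⟩
    simp only [dif_pos hex]
    exact hex.choose_spec
  have hfs : ∀ w : W, ρ (σ (f w)) = f w := by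
    intro w
    obtain ⟨w', hw'⟩ := hWedge w
    exact hσ _ (hrange hw' _ (p hw').start_mem_support)
  have hf'inj : Function.Injective (fun w => σ (f w)) := by
    intro w w' h
    apply f.injective
    rw [← hfs w, ← hfs w']
    exact congrArg ρ h
  refine ⟨⟨fun w => σ (f w), hf'inj⟩, fun {a b} h =>
    pullWalk hrefl (p h) (fun z hz => hσ z (hrange h z hz)), ?_, ?_, ?_, ?_⟩
  · intro a b h
    rw [SimpleGraph.Walk.isPath_def]
    apply List.Nodup.of_map ρ
    rw [pullWalk_support]
    exact (hpath h).support_nodup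
  · intro a b h
    exact (pullWalk_congr hrefl (p h.symm) ((p h).reverse) (hsymm h)
        (fun z hz => hσ z (hrange h.symm z hz))
        (fun z hz => hσ z (hrange h.symm z (by rw [hsymm h]; exact hz)))).trans
      (pullWalk_reverse hrefl (p h) (fun z hz => hσ z (hrange h z hz))
        (fun z hz => hσ z (hrange h.symm z (by rw [hsymm h]; exact hz))))
  · intro a b h c hc
    have : ρ (σ (f c)) ∈ ((pullWalk hrefl (p h)
        (fun z hz => hσ z (hrange h z hz))).support.map ρ) :=
      List.mem_map_of_mem (f := ρ) hc
    rw [pullWalk_support, hfs] at this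
    exact hbranch h c this
  · intro a b c d h₁ h₂ hne x hx₁ hx₂
    have m₁ : ρ x ∈ (p h₁).support := by
      rw [← pullWalk_support hrefl (p h₁) (fun z hz => hσ z (hrange h₁ z hz))]
      exact List.mem_map_of_mem (f := ρ) hx₁
    have m₂ : ρ x ∈ (p h₂).support := by
      rw [← pullWalk_support hrefl (p h₂) (fun z hz => hσ z (hrange h₂ z hz))]
      exact List.mem_map_of_mem (f := ρ) hx₂
    obtain ⟨w, hw⟩ := hdisj h₁ h₂ hne (ρ x) m₁ m₂
    refine ⟨w, hinj ?_⟩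
    rw [hw, ← hfs w]
    rfl
section Main
variable {G₁ G₂ : Type} [Group G₁] [Group G₂] {S₁ : Set G₁} {S₂ : Set G₂}

def cosetLike (G₁ G₂ : Type) [Group G₁] [Group G₂] (C : Set (Coprod G₁ G₂)) : Prop :=
  (∃ g, C = {v | g⁻¹ * v ∈ sgA G₁ G₂}) ∨ (∃ g, C = {v | g⁻¹ * v ∈ sgB G₁ G₂})

lemma coset_eq_of_mem {H : Subgroup (Coprod G₁ G₂)} {g g' x : Coprod G₁ G₂}
    (hx : g⁻¹ * x ∈ H) (hx' : g'⁻¹ * x ∈ H) :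
    {v | g⁻¹ * v ∈ H} = {v | g'⁻¹ * v ∈ H} := by
  ext v
  simp only [Set.mem_setOf_eq]
  constructor
  · intro hv
    have : g'⁻¹ * v = (g'⁻¹ * x) * (g⁻¹ * x)⁻¹ * (g⁻¹ * v) := by group
    rw [this]
    exact mul_mem (mul_mem hx' (inv_mem hx)) hv
  · intro hv
    have : g⁻¹ * v = (g⁻¹ * x) * (g'⁻¹ * x)⁻¹ * (g'⁻¹ * v) := by group
    rw [this]
    exact mul_mem (mul_mem hx (inv_mem hx')) hv

lemma mixed_coset_absurd {g g' x y : Coprod G₁ G₂} (hx : g⁻¹ * x ∈ sgA G₁ G₂)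
    (hy : g⁻¹ * y ∈ sgA G₁ G₂) (hx' : g'⁻¹ * x ∈ sgB G₁ G₂) (hy' : g'⁻¹ * y ∈ sgB G₁ G₂)
    (hxy : x ≠ y) : False := by
  have h1 : x⁻¹ * y ∈ sgA G₁ G₂ := by
    have : x⁻¹ * y = (g⁻¹ * x)⁻¹ * (g⁻¹ * y) := by group
    rw [this]
    exact mul_mem (inv_mem hx) hy
  have h2 : x⁻¹ * y ∈ sgB G₁ G₂ := by
    have : x⁻¹ * y = (g'⁻¹ * x)⁻¹ * (g'⁻¹ * y) := by group
    rw [this]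
    exact mul_mem (inv_mem hx') hy'
  exact hxy (inv_mul_eq_one.1 (eq_one_of_mem_A_mem_B h1 h2))

lemma cosetLike_eq {C C' : Set (Coprod G₁ G₂)} (hC : cosetLike G₁ G₂ C)
    (hC' : cosetLike G₁ G₂ C') {x y : Coprod G₁ G₂} (hxy : x ≠ y)
    (hx : x ∈ C) (hx' : x ∈ C') (hy : y ∈ C) (hy' : y ∈ C') : C = C' := by
  rcases hC with ⟨g, rfl⟩ | ⟨g, rfl⟩ <;> rcases hC' with ⟨g', rfl⟩ | ⟨g', rfl⟩
  · exact coset_eq_of_mem hx hx'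
  · exact absurd (mixed_coset_absurd hx hy hx' hy' hxy) not_false
  · exact absurd (mixed_coset_absurd hx' hy' hx hy hxy) not_false
  · exact coset_eq_of_mem hx hx'

lemma sym_ne {W : Type} {u v u' v' : W} (h1 : u = u' → v = v' → False)
    (h2 : u = v' → v = u' → False) : s(u,v) ≠ s(u',v') := by
  intro he
  rcases Sym2.eq_iff.1 he with ⟨ha, hb⟩ | ⟨ha, hb⟩
  exacts [h1 ha hb, h2 ha hb]

lemma main_lemma {W : Type} [hnW : Nonempty W] (K : SimpleGraph W)
    (hWedge : ∀ w : W, ∃ w', K.Adj w w')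
    (hK4 : ∀ a b c d : W, K.Adj a b → K.Adj c d → ∃ w₀ w₁ w₂ w₃ : W,
      K.Adj w₀ w₁ ∧ K.Adj w₁ w₂ ∧ K.Adj w₂ w₃ ∧ K.Adj w₃ w₀ ∧ w₀ ≠ w₂ ∧ w₁ ≠ w₃ ∧
      (s(a,b) = s(w₀,w₁) ∨ s(a,b) = s(w₁,w₂) ∨ s(a,b) = s(w₂,w₃) ∨ s(a,b) = s(w₃,w₀)) ∧
      (s(c,d) = s(w₀,w₁) ∨ s(c,d) = s(w₁,w₂) ∨ s(c,d) = s(w₂,w₃) ∨ s(c,d) = s(w₃,w₀)))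
    (hsub : ContainsSubdivision (bigGamma G₁ G₂ S₁ S₂) K) :
    ContainsSubdivision (cayleyGraph G₁ S₁) K ∨ ContainsSubdivision (cayleyGraph G₂ S₂) K := by
  obtain ⟨f, p, hpath, hsymm, hbranch, hdisj⟩ := hsub
  have hfne : ∀ {u v : W}, u ≠ v → f u ≠ f v := fun h he => h (f.injective he)
  have hsupp_eq : ∀ {a b c d : W} (h : K.Adj a b) (h' : K.Adj c d), s(a,b) = s(c,d) →
      ∀ x, x ∈ (p h).support → x ∈ (p h').support := by
    intro a b c d h h' he x hx
    rcases Sym2.eq_iff.1 he with ⟨rfl, rfl⟩ | ⟨rfl, rfl⟩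
    · exact hx
    · have hrev : p h' = (p h).reverse := hsymm h
      rw [hrev, SimpleGraph.Walk.support_reverse, List.mem_reverse]
      exact hx
  have hdisj2 : ∀ {a b c d : W} (h₁ : K.Adj a b) (h₂ : K.Adj c d), s(a,b) ≠ s(c,d) →
      ∀ x, x ∈ (p h₁).support → x ∈ (p h₂).support →
      ((x = f a ∨ x = f b) ∧ (x = f c ∨ x = f d)) := by
    intro a b c d h₁ h₂ hne x hx₁ hx₂
    obtain ⟨w, rfl⟩ := hdisj h₁ h₂ hne x hx₁ hx₂
    constructor
    · rcases hbranch h₁ w hx₁ with rfl | rfl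
      · exact Or.inl rfl
      · exact Or.inr rfl
    · rcases hbranch h₂ w hx₂ with rfl | rfl
      · exact Or.inl rfl
      · exact Or.inr rfl
  have hhead : ∀ {u v : W} (h : K.Adj u v), f u ∉ (p h).support.tail := by
    intro u v h hmem
    have hnd := (hpath h).support_nodup
    rw [(p h).support_eq_cons] at hnd
    exact (List.nodup_cons.1 hnd).1 hmem
  have hcoset : ∀ {a b c d : W} (h : K.Adj a b) (h' : K.Adj c d),
      ∃ C : Set (Coprod G₁ G₂), cosetLike G₁ G₂ C ∧
        (∀ x ∈ (p h).support, x ∈ C) ∧ (∀ x ∈ (p h').support, x ∈ C) := by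
    intro a b c d h h'
    obtain ⟨w₀, w₁, w₂, w₃, h01, h12, h23, h30, h02, h13, he1, he2⟩ := hK4 a b c d h h'
    have d01 : w₀ ≠ w₁ := h01.ne
    have d12 : w₁ ≠ w₂ := h12.ne
    have d23 : w₂ ≠ w₃ := h23.ne
    have d30 : w₃ ≠ w₀ := h30.ne
    have ne01_12 : s(w₀,w₁) ≠ s(w₁,w₂) := sym_ne (fun ha _ => d01 ha) (fun ha _ => h02 ha)
    have ne12_23 : s(w₁,w₂) ≠ s(w₂,w₃) := sym_ne (fun ha _ => d12 ha) (fun ha _ => h13 ha)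
    have ne23_30 : s(w₂,w₃) ≠ s(w₃,w₀) := sym_ne (fun ha _ => d23 ha) (fun ha _ => h02 ha.symm)
    have ne01_30 : s(w₀,w₁) ≠ s(w₃,w₀) := sym_ne (fun ha _ => d30 ha.symm) (fun _ hb => h13 hb)
    have ne01_23 : s(w₀,w₁) ≠ s(w₂,w₃) := sym_ne (fun ha _ => h02 ha) (fun _ hb => d12 hb)
    have ne12_30 : s(w₁,w₂) ≠ s(w₃,w₀) := sym_ne (fun ha _ => h13 ha) (fun ha _ => d01 ha.symm)
    set q : (bigGamma G₁ G₂ S₁ S₂).Walk (f w₀) (f w₀) :=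
      (p h01).append ((p h12).append ((p h23).append (p h30))) with hq
    have D1 : (p h01).support.tail.Disjoint (p h12).support.tail := by
      intro x hx hx'
      obtain ⟨hA, hB⟩ := hdisj2 h01 h12 ne01_12 x (List.mem_of_mem_tail hx)
        (List.mem_of_mem_tail hx')
      rcases hA with rfl | rfl
      · rcases hB with he | he
        · exact hfne d01 he
        · exact hfne h02 he
      · exact hhead h12 hx'
    have D2 : (p h12).support.tail.Disjoint (p h23).support.tail := by
      intro x hx hx'
      obtain ⟨hA, hB⟩ := hdisj2 h12 h23 ne12_23 x (List.mem_of_mem_tail hx)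
        (List.mem_of_mem_tail hx')
      rcases hA with rfl | rfl
      · rcases hB with he | he
        · exact hfne d12 he
        · exact hfne h13 he
      · exact hhead h23 hx'
    have D3 : (p h23).support.tail.Disjoint (p h30).support.tail := by
      intro x hx hx'
      obtain ⟨hA, hB⟩ := hdisj2 h23 h30 ne23_30 x (List.mem_of_mem_tail hx)
        (List.mem_of_mem_tail hx')
      rcases hA with rfl | rfl
      · rcases hB with he | he
        · exact hfne d23 he
        · exact hfne (fun hh => h02 hh.symm) he
      · exact hhead h30 hx'
    have D4 : (p h01).support.tail.Disjoint (p h30).support.tail := by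
      intro x hx hx'
      obtain ⟨hA, hB⟩ := hdisj2 h01 h30 ne01_30 x (List.mem_of_mem_tail hx)
        (List.mem_of_mem_tail hx')
      rcases hA with rfl | rfl
      · rcases hB with he | he
        · exact hfne (fun hh => d30 hh.symm) he
        · exact hhead h01 hx
      · rcases hB with he | he
        · exact hfne h13 he
        · exact hfne (fun hh => d01 hh.symm) he
    have D5 : (p h01).support.tail.Disjoint (p h23).support.tail := by
      intro x hx hx'
      obtain ⟨hA, hB⟩ := hdisj2 h01 h23 ne01_23 x (List.mem_of_mem_tail hx)
        (List.mem_of_mem_tail hx')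
      rcases hA with rfl | rfl
      · rcases hB with he | he
        · exact hfne h02 he
        · exact hfne (fun hh => d30 hh.symm) he
      · rcases hB with he | he
        · exact hfne d12 he
        · exact hfne h13 he
    have D6 : (p h12).support.tail.Disjoint (p h30).support.tail := by
      intro x hx hx'
      obtain ⟨hA, hB⟩ := hdisj2 h12 h30 ne12_30 x (List.mem_of_mem_tail hx)
        (List.mem_of_mem_tail hx')
      rcases hA with rfl | rfl
      · rcases hB with he | he
        · exact hfne h13 he
        · exact hfne (fun hh => d01 hh.symm) he
      · rcases hB with he | he
        · exact hfne d23 he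
        · exact hfne h02 he.symm
    have hqsupp : q.support = (p h01).support ++ ((p h12).support.tail ++
        ((p h23).support.tail ++ (p h30).support.tail)) := by
      rw [hq, SimpleGraph.Walk.support_append, SimpleGraph.Walk.support_append,
        SimpleGraph.Walk.support_append,
        List.tail_append_of_ne_nil (p h12).support_ne_nil,
        List.tail_append_of_ne_nil (p h23).support_ne_nil]
    have hqtail : q.support.tail = (p h01).support.tail ++ ((p h12).support.tail ++
        ((p h23).support.tail ++ (p h30).support.tail)) := by
      rw [hqsupp, List.tail_append_of_ne_nil (p h01).support_ne_nil]
    have hnodup : q.support.tail.Nodup := by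
      rw [hqtail]
      refine List.nodup_append'.2 ⟨(hpath h01).support_nodup.tail,
        List.nodup_append'.2 ⟨(hpath h12).support_nodup.tail,
          List.nodup_append'.2 ⟨(hpath h23).support_nodup.tail,
            (hpath h30).support_nodup.tail, D3⟩, ?_⟩, ?_⟩
      · rw [List.disjoint_append_right]
        exact ⟨D2, D6⟩
      · rw [List.disjoint_append_right, List.disjoint_append_right]
        exact ⟨D1, D5, D4⟩
    have hsub_q : ∀ x, (x ∈ (p h01).support ∨ x ∈ (p h12).support ∨ x ∈ (p h23).support ∨
        x ∈ (p h30).support) → x ∈ q.support := by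
      intro x hx
      rw [hq, SimpleGraph.Walk.mem_support_append_iff, SimpleGraph.Walk.mem_support_append_iff,
        SimpleGraph.Walk.mem_support_append_iff]
      tauto
    rcases cycle_in_coset q hnodup with hA | hB
    · refine ⟨{v | (f w₀)⁻¹ * v ∈ sgA G₁ G₂}, Or.inl ⟨f w₀, rfl⟩, ?_, ?_⟩
      · intro x hx
        apply hA
        apply hsub_q
        rcases he1 with he | he | he | he
        exacts [Or.inl (hsupp_eq h h01 he x hx), Or.inr (Or.inl (hsupp_eq h h12 he x hx)),
          Or.inr (Or.inr (Or.inl (hsupp_eq h h23 he x hx))),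
          Or.inr (Or.inr (Or.inr (hsupp_eq h h30 he x hx)))]
      · intro x hx
        apply hA
        apply hsub_q
        rcases he2 with he | he | he | he
        exacts [Or.inl (hsupp_eq h' h01 he x hx), Or.inr (Or.inl (hsupp_eq h' h12 he x hx)),
          Or.inr (Or.inr (Or.inl (hsupp_eq h' h23 he x hx))),
          Or.inr (Or.inr (Or.inr (hsupp_eq h' h30 he x hx)))]
    · refine ⟨{v | (f w₀)⁻¹ * v ∈ sgB G₁ G₂}, Or.inr ⟨f w₀, rfl⟩, ?_, ?_⟩
      · intro x hx
        apply hB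
        apply hsub_q
        rcases he1 with he | he | he | he
        exacts [Or.inl (hsupp_eq h h01 he x hx), Or.inr (Or.inl (hsupp_eq h h12 he x hx)),
          Or.inr (Or.inr (Or.inl (hsupp_eq h h23 he x hx))),
          Or.inr (Or.inr (Or.inr (hsupp_eq h h30 he x hx)))]
      · intro x hx
        apply hB
        apply hsub_q
        rcases he2 with he | he | he | he
        exacts [Or.inl (hsupp_eq h' h01 he x hx), Or.inr (Or.inl (hsupp_eq h' h12 he x hx)),
          Or.inr (Or.inr (Or.inl (hsupp_eq h' h23 he x hx))),
          Or.inr (Or.inr (Or.inr (hsupp_eq h' h30 he x hx)))]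
  -- fix a base edge and a global coset
  obtain ⟨w⟩ := hnW
  obtain ⟨w', hw⟩ := hWedge w
  obtain ⟨C₀, hC₀like, hC₀h₀, -⟩ := hcoset hw hw
  have hmain : ∀ {a b : W} (h : K.Adj a b), ∀ x ∈ (p h).support, x ∈ C₀ := by
    intro a b h
    obtain ⟨C, hClike, hCh₀, hCh⟩ := hcoset hw h
    have hCeq : C = C₀ := cosetLike_eq hClike hC₀like (hfne hw.ne)
      (hCh₀ _ (p hw).start_mem_support) (hC₀h₀ _ (p hw).start_mem_support)
      (hCh₀ _ (p hw).end_mem_support) (hC₀h₀ _ (p hw).end_mem_support)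
    intro x hx
    rw [← hCeq]
    exact hCh x hx
  clear hC₀h₀
  rcases hC₀like with ⟨g, rfl⟩ | ⟨g, rfl⟩
  · left
    refine subdivision_transfer ⟨(1 : G₁)⟩ (fun a => g * Coprod.inl a)
      (fun a a' h => Coprod.inl_injective (mul_left_cancel h)) ?_ f p hpath hsymm hbranch hdisj
      ?_ hWedge
    · intro a b hadj
      rw [SimpleGraph.fromRel_adj] at hadj
      obtain ⟨hne, hrel⟩ := hadj
      have hab : a ≠ b := fun h => hne (by rw [h])
      refine (SimpleGraph.fromRel_adj _ _ _).2 ⟨hab, ?_⟩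
      rcases hrel with ⟨s, hs, hy⟩ | ⟨s, hs, hx⟩
      · have hs' : s = Coprod.inl (a⁻¹ * b) := by
          have h1 : s = (g * Coprod.inl a)⁻¹ * (g * Coprod.inl b) := by
            have hy' : g * Coprod.inl b = g * Coprod.inl a * s := hy
            rw [hy']; group
          rw [h1, map_mul, map_inv]; group
        rcases hs with ⟨s₁, hs₁, rfl⟩ | ⟨s₂, hs₂, rfl⟩
        · have hseq : s₁ = a⁻¹ * b := Coprod.inl_injective hs'
          exact Or.inl ⟨s₁, hs₁, by rw [hseq]; group⟩
        · exfalso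
          have hone : Coprod.inr s₂ = 1 :=
            eq_one_of_mem_A_mem_B ⟨a⁻¹ * b, hs'.symm⟩ ⟨s₂, rfl⟩
          apply hne
          rw [hy, hone, mul_one]
      · have hs' : s = Coprod.inl (b⁻¹ * a) := by
          have h1 : s = (g * Coprod.inl b)⁻¹ * (g * Coprod.inl a) := by
            have hx' : g * Coprod.inl a = g * Coprod.inl b * s := hx
            rw [hx']; group
          rw [h1, map_mul, map_inv]; group
        rcases hs with ⟨s₁, hs₁, rfl⟩ | ⟨s₂, hs₂, rfl⟩
        · have hseq : s₁ = b⁻¹ * a := Coprod.inl_injective hs'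
          exact Or.inr ⟨s₁, hs₁, by rw [hseq]; group⟩
        · exfalso
          have hone : Coprod.inr s₂ = 1 :=
            eq_one_of_mem_A_mem_B ⟨b⁻¹ * a, hs'.symm⟩ ⟨s₂, rfl⟩
          apply hne
          rw [hx, hone, mul_one]
    · intro a b h z hz
      obtain ⟨a', ha'⟩ := hmain h z hz
      exact ⟨a', by show g * Coprod.inl a' = z; rw [ha']; group⟩
  · right
    refine subdivision_transfer ⟨(1 : G₂)⟩ (fun a => g * Coprod.inr a)
      (fun a a' h => Coprod.inr_injective (mul_left_cancel h)) ?_ f p hpath hsymm hbranch hdisj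
      ?_ hWedge
    · intro a b hadj
      rw [SimpleGraph.fromRel_adj] at hadj
      obtain ⟨hne, hrel⟩ := hadj
      have hab : a ≠ b := fun h => hne (by rw [h])
      refine (SimpleGraph.fromRel_adj _ _ _).2 ⟨hab, ?_⟩
      rcases hrel with ⟨s, hs, hy⟩ | ⟨s, hs, hx⟩
      · have hs' : s = Coprod.inr (a⁻¹ * b) := by
          have h1 : s = (g * Coprod.inr a)⁻¹ * (g * Coprod.inr b) := by
            have hy' : g * Coprod.inr b = g * Coprod.inr a * s := hy
            rw [hy']; group
          rw [h1, map_mul, map_inv]; group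
        rcases hs with ⟨s₁, hs₁, rfl⟩ | ⟨s₂, hs₂, rfl⟩
        · exfalso
          have hone : Coprod.inl s₁ = 1 :=
            eq_one_of_mem_A_mem_B ⟨s₁, rfl⟩ ⟨a⁻¹ * b, hs'.symm⟩
          apply hne
          rw [hy, hone, mul_one]
        · have hseq : s₂ = a⁻¹ * b := Coprod.inr_injective hs'
          exact Or.inl ⟨s₂, hs₂, by rw [hseq]; group⟩
      · have hs' : s = Coprod.inr (b⁻¹ * a) := by
          have h1 : s = (g * Coprod.inr b)⁻¹ * (g * Coprod.inr a) := by
            have hx' : g * Coprod.inr a = g * Coprod.inr b * s := hx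
            rw [hx']; group
          rw [h1, map_mul, map_inv]; group
        rcases hs with ⟨s₁, hs₁, rfl⟩ | ⟨s₂, hs₂, rfl⟩
        · exfalso
          have hone : Coprod.inl s₁ = 1 :=
            eq_one_of_mem_A_mem_B ⟨s₁, rfl⟩ ⟨b⁻¹ * a, hs'.symm⟩
          apply hne
          rw [hx, hone, mul_one]
        · have hseq : s₂ = b⁻¹ * a := Coprod.inr_injective hs'
          exact Or.inr ⟨s₂, hs₂, by rw [hseq]; group⟩
    · intro a b h z hz
      obtain ⟨a', ha'⟩ := hmain h z hz
      exact ⟨a', by show g * Coprod.inr a' = z; rw [ha']; group⟩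

end Main
section KFacts

lemma K5_adj {a b : Fin 5} : (SimpleGraph.completeGraph (Fin 5)).Adj a b ↔ a ≠ b := Iff.rfl

lemma K5_wedge : ∀ w : Fin 5, ∃ w', (SimpleGraph.completeGraph (Fin 5)).Adj w w' := by
  intro w
  have : ∃ w' : Fin 5, w ≠ w' := by revert w; decide
  obtain ⟨w', hw⟩ := this
  exact ⟨w', K5_adj.2 hw⟩

lemma fin5_aux1 : ∀ a b : Fin 5, ∃ x y : Fin 5, x ≠ y ∧ x ≠ a ∧ x ≠ b ∧ y ≠ a ∧ y ≠ b := by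
  decide

lemma fin5_aux2 : ∀ a b c : Fin 5, ∃ x : Fin 5, x ≠ a ∧ x ≠ b ∧ x ≠ c := by decide

lemma K5_four : ∀ a b c d : Fin 5, (SimpleGraph.completeGraph (Fin 5)).Adj a b →
    (SimpleGraph.completeGraph (Fin 5)).Adj c d → ∃ w₀ w₁ w₂ w₃ : Fin 5,
    (SimpleGraph.completeGraph (Fin 5)).Adj w₀ w₁ ∧ (SimpleGraph.completeGraph (Fin 5)).Adj w₁ w₂ ∧
    (SimpleGraph.completeGraph (Fin 5)).Adj w₂ w₃ ∧ (SimpleGraph.completeGraph (Fin 5)).Adj w₃ w₀ ∧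
    w₀ ≠ w₂ ∧ w₁ ≠ w₃ ∧
    (s(a,b) = s(w₀,w₁) ∨ s(a,b) = s(w₁,w₂) ∨ s(a,b) = s(w₂,w₃) ∨ s(a,b) = s(w₃,w₀)) ∧
    (s(c,d) = s(w₀,w₁) ∨ s(c,d) = s(w₁,w₂) ∨ s(c,d) = s(w₂,w₃) ∨ s(c,d) = s(w₃,w₀)) := by
  intro a b c d hab hcd
  rw [K5_adj] at hab hcd
  by_cases hmain : s(a,b) = s(c,d)
  · obtain ⟨x, y, hxy, hxa, hxb, hya, hyb⟩ := fin5_aux1 a b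
    exact ⟨a, b, x, y, K5_adj.2 hab, K5_adj.2 (fun h => hxb h.symm), K5_adj.2 hxy,
      K5_adj.2 hya, fun h => hxa h.symm, fun h => hyb h.symm, Or.inl rfl,
      Or.inl hmain.symm⟩
  · by_cases hca : c = a
    · subst hca
      have hdb : d ≠ b := fun h => hmain (by rw [h])
      obtain ⟨x, hxc, hxb, hxd⟩ := fin5_aux2 c b d
      exact ⟨b, c, d, x, K5_adj.2 hab.symm, K5_adj.2 hcd, K5_adj.2 (fun h => hxd h.symm),
        K5_adj.2 hxb, hdb.symm, fun h => hxc h.symm,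
        Or.inl Sym2.eq_swap.symm, Or.inr (Or.inl rfl)⟩
    · by_cases hcb : c = b
      · subst hcb
        have hda : d ≠ a := fun h => hmain (by rw [h]; exact Sym2.eq_swap.symm)
        obtain ⟨x, hxa, hxc, hxd⟩ := fin5_aux2 a c d
        exact ⟨a, c, d, x, K5_adj.2 hab, K5_adj.2 hcd, K5_adj.2 (fun h => hxd h.symm),
          K5_adj.2 hxa, hda.symm, fun h => hxc h.symm,
          Or.inl rfl, Or.inr (Or.inl rfl)⟩
      · by_cases hda : d = a
        · subst hda
          have hcb' : c ≠ b := hcb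
          obtain ⟨x, hxd, hxb, hxc⟩ := fin5_aux2 d b c
          exact ⟨b, d, c, x, K5_adj.2 hab.symm, K5_adj.2 (fun h => hcd h.symm),
            K5_adj.2 (fun h => hxc h.symm), K5_adj.2 hxb, fun h => hcb (h.symm),
            fun h => hxd h.symm,
            Or.inl Sym2.eq_swap.symm, Or.inr (Or.inl Sym2.eq_swap.symm)⟩
        · by_cases hdb : d = b
          · subst hdb
            obtain ⟨x, hxa, hxd, hxc⟩ := fin5_aux2 a d c
            exact ⟨a, d, c, x, K5_adj.2 hab, K5_adj.2 (fun h => hcd h.symm),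
              K5_adj.2 (fun h => hxc h.symm), K5_adj.2 hxa, fun h => hca h.symm,
              fun h => hxd h.symm,
              Or.inl rfl, Or.inr (Or.inl Sym2.eq_swap.symm)⟩
          · exact ⟨a, b, c, d, K5_adj.2 hab, K5_adj.2 (fun h => hcb h.symm),
              K5_adj.2 hcd, K5_adj.2 hda, fun h => hca h.symm, fun h => hdb h.symm,
              Or.inl rfl, Or.inr (Or.inr (Or.inl rfl))⟩

abbrev K33 := completeBipartiteGraph (Fin 3) (Fin 3)

lemma K33_adj_lr (i j : Fin 3) : K33.Adj (.inl i) (.inr j) := by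
  simp [completeBipartiteGraph]

lemma K33_adj_rl (i j : Fin 3) : K33.Adj (.inr j) (.inl i) := by
  simp [completeBipartiteGraph]

lemma K33_adj_elim {u v : Fin 3 ⊕ Fin 3} (h : K33.Adj u v) :
    (∃ i j, u = .inl i ∧ v = .inr j) ∨ (∃ i j, u = .inr j ∧ v = .inl i) := by
  rcases u with i | i <;> rcases v with j | j <;>
    simp [completeBipartiteGraph] at h ⊢

lemma K33_wedge : ∀ w : Fin 3 ⊕ Fin 3, ∃ w', K33.Adj w w' := by
  intro w
  rcases w with i | i
  · exact ⟨.inr 0, K33_adj_lr i 0⟩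
  · exact ⟨.inl 0, K33_adj_rl 0 i⟩

lemma fin3_aux : ∀ i : Fin 3, ∃ i' : Fin 3, i' ≠ i := by decide

lemma k33core : ∀ i j k l : Fin 3, ∃ w₀ w₁ w₂ w₃ : Fin 3 ⊕ Fin 3,
    K33.Adj w₀ w₁ ∧ K33.Adj w₁ w₂ ∧ K33.Adj w₂ w₃ ∧ K33.Adj w₃ w₀ ∧
    w₀ ≠ w₂ ∧ w₁ ≠ w₃ ∧
    (s(Sum.inl i, Sum.inr j) = s(w₀,w₁) ∨ s(Sum.inl i, Sum.inr j) = s(w₁,w₂) ∨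
      s(Sum.inl i, Sum.inr j) = s(w₂,w₃) ∨ s(Sum.inl i, Sum.inr j) = s(w₃,w₀)) ∧
    (s(Sum.inl k, Sum.inr l) = s(w₀,w₁) ∨ s(Sum.inl k, Sum.inr l) = s(w₁,w₂) ∨
      s(Sum.inl k, Sum.inr l) = s(w₂,w₃) ∨ s(Sum.inl k, Sum.inr l) = s(w₃,w₀)) := by
  intro i j k l
  by_cases hik : i = k
  · by_cases hjl : j = l
    · subst hik; subst hjl
      obtain ⟨i', hi'⟩ := fin3_aux i
      obtain ⟨j', hj'⟩ := fin3_aux j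
      exact ⟨.inl i, .inr j, .inl i', .inr j', K33_adj_lr _ _, K33_adj_rl _ _,
        K33_adj_lr _ _, K33_adj_rl _ _,
        fun h => hi' (Sum.inl_injective h).symm, fun h => hj' (Sum.inr_injective h).symm,
        Or.inl rfl, Or.inl rfl⟩
    · subst hik
      obtain ⟨i', hi'⟩ := fin3_aux i
      exact ⟨.inr j, .inl i, .inr l, .inl i', K33_adj_rl _ _, K33_adj_lr _ _,
        K33_adj_rl _ _, K33_adj_lr _ _,
        fun h => hjl (Sum.inr_injective h), fun h => hi' (Sum.inl_injective h).symm,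
        Or.inl Sym2.eq_swap.symm, Or.inr (Or.inl rfl)⟩
  · by_cases hjl : j = l
    · subst hjl
      obtain ⟨j', hj'⟩ := fin3_aux j
      exact ⟨.inl i, .inr j, .inl k, .inr j', K33_adj_lr _ _, K33_adj_rl _ _,
        K33_adj_lr _ _, K33_adj_rl _ _,
        fun h => hik (Sum.inl_injective h), fun h => hj' (Sum.inr_injective h).symm,
        Or.inl rfl, Or.inr (Or.inl Sym2.eq_swap.symm)⟩
    · exact ⟨.inl i, .inr j, .inl k, .inr l, K33_adj_lr _ _, K33_adj_rl _ _,
        K33_adj_lr _ _, K33_adj_rl _ _,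
        fun h => hik (Sum.inl_injective h), fun h => hjl (Sum.inr_injective h),
        Or.inl rfl, Or.inr (Or.inr (Or.inl rfl))⟩

lemma K33_four : ∀ a b c d : Fin 3 ⊕ Fin 3, K33.Adj a b → K33.Adj c d →
    ∃ w₀ w₁ w₂ w₃ : Fin 3 ⊕ Fin 3,
    K33.Adj w₀ w₁ ∧ K33.Adj w₁ w₂ ∧ K33.Adj w₂ w₃ ∧ K33.Adj w₃ w₀ ∧
    w₀ ≠ w₂ ∧ w₁ ≠ w₃ ∧
    (s(a,b) = s(w₀,w₁) ∨ s(a,b) = s(w₁,w₂) ∨ s(a,b) = s(w₂,w₃) ∨ s(a,b) = s(w₃,w₀)) ∧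
    (s(c,d) = s(w₀,w₁) ∨ s(c,d) = s(w₁,w₂) ∨ s(c,d) = s(w₂,w₃) ∨ s(c,d) = s(w₃,w₀)) := by
  intro a b c d hab hcd
  have h1 : ∃ i j, s(a, b) = s(Sum.inl i, Sum.inr j) := by
    rcases K33_adj_elim hab with ⟨i, j, rfl, rfl⟩ | ⟨i, j, rfl, rfl⟩
    · exact ⟨i, j, rfl⟩
    · exact ⟨i, j, Sym2.eq_swap⟩
  have h2 : ∃ k l, s(c, d) = s(Sum.inl k, Sum.inr l) := by
    rcases K33_adj_elim hcd with ⟨k, l, rfl, rfl⟩ | ⟨k, l, rfl, rfl⟩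
    · exact ⟨k, l, rfl⟩
    · exact ⟨k, l, Sym2.eq_swap⟩
  obtain ⟨i, j, he1⟩ := h1
  obtain ⟨k, l, he2⟩ := h2
  obtain ⟨w₀, w₁, w₂, w₃, a01, a12, a23, a30, d02, d13, hc1, hc2⟩ := k33core i j k l
  refine ⟨w₀, w₁, w₂, w₃, a01, a12, a23, a30, d02, d13, ?_, ?_⟩
  · rw [he1]; exact hc1
  · rw [he2]; exact hc2

end KFacts

end FPPlanar
end FPPlanarAux

/-- If `G₁`, `G₂` have generating sets `S₁`, `S₂` with planar Cayley graphs, then the Cayley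
graph of the free product `G₁ * G₂` with respect to `S₁ ⊔ S₂` is planar. -/
theorem stmt_11 (G₁ G₂ : Type) [Group G₁] [Group G₂] (S₁ : Set G₁) (S₂ : Set G₂)
    (hgen₁ : Subgroup.closure S₁ = ⊤) (hgen₂ : Subgroup.closure S₂ = ⊤)
    (h₁ : IsPlanar (cayleyGraph G₁ S₁)) (h₂ : IsPlanar (cayleyGraph G₂ S₂)) :
    IsPlanar (cayleyGraph (Monoid.Coprod G₁ G₂)
      (⇑Monoid.Coprod.inl '' S₁ ∪ ⇑Monoid.Coprod.inr '' S₂)) := by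
  constructor
  · intro hsub
    rcases FPPlanar.main_lemma (SimpleGraph.completeGraph (Fin 5)) FPPlanar.K5_wedge
      FPPlanar.K5_four hsub with hA | hB
    · exact h₁.1 hA
    · exact h₂.1 hB
  · intro hsub
    rcases FPPlanar.main_lemma (completeBipartiteGraph (Fin 3) (Fin 3)) FPPlanar.K33_wedge
      FPPlanar.K33_four hsub with hA | hB
    · exact h₁.2 hA
    · exact h₂.2 hB
end

section
/- Let Γ' be an induced subgraph of a graph product graph Γ of finite cyclic groups. Then G(Γ') embeds as a subgroup of G(Γ) (via the canonical map sending generators to generators), and consequently Cay(G(Γ')) is a subgraph of Cay(G(Γ)). -/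
open scoped commutatorElement

section Aux

variable {V : Type} {Γ : SimpleGraph V} {o : V → ℕ} {A : Set V}

/-- Elements of the relation set are trivial in the presented group. -/
lemma mk_rel_eq_one {α : Type*} {rels : Set (FreeGroup α)} {r : FreeGroup α} (h : r ∈ rels) :
    PresentedGroup.mk rels r = 1 := by
  have : r ∈ Subgroup.normalClosure rels := Subgroup.subset_normalClosure h
  exact (QuotientGroup.eq_one_iff r).mpr this

lemma fwd_rels (Γ : SimpleGraph V) (o : V → ℕ) (A : Set V) :
    ∀ r ∈ graphProductRels (Γ.induce A) (fun v => o v),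
      FreeGroup.lift (fun v : A => (PresentedGroup.of (v : V) : GraphProduct Γ o)) r = 1 := by
  rintro r (⟨v, rfl⟩ | ⟨v, w, hvw, rfl⟩)
  · rw [map_pow, FreeGroup.lift_apply_of]
    have : (PresentedGroup.of (v : V) : GraphProduct Γ o) ^ o v
        = PresentedGroup.mk _ (FreeGroup.of (v : V) ^ o v) := by
      simp [PresentedGroup.of, map_pow]
    rw [this]
    exact mk_rel_eq_one (Or.inl ⟨v, rfl⟩)
  · rw [map_commutatorElement, FreeGroup.lift_apply_of, FreeGroup.lift_apply_of]
    have : (⁅(PresentedGroup.of (v : V) : GraphProduct Γ o), PresentedGroup.of (w : V)⁆)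
        = PresentedGroup.mk (graphProductRels Γ o) (⁅FreeGroup.of (v : V), FreeGroup.of (w : V)⁆) := by
      simp [PresentedGroup.of, map_commutatorElement]
    rw [this]
    exact mk_rel_eq_one (Or.inr ⟨v, w, hvw, rfl⟩)

/-- The canonical map `G(Γ[A]) → G(Γ)`. -/
def gpInclusion (Γ : SimpleGraph V) (o : V → ℕ) (A : Set V) :
    GraphProduct (Γ.induce A) (fun v => o v) →* GraphProduct Γ o :=
  PresentedGroup.toGroup (fwd_rels Γ o A)

open Classical in
noncomputable def retractFun (Γ : SimpleGraph V) (o : V → ℕ) (A : Set V) (v : V) :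
    GraphProduct (Γ.induce A) (fun v => o v) :=
  if h : v ∈ A then PresentedGroup.of (⟨v, h⟩ : A) else 1

lemma bwd_rels (Γ : SimpleGraph V) (o : V → ℕ) (A : Set V) :
    ∀ r ∈ graphProductRels Γ o, FreeGroup.lift (retractFun Γ o A) r = 1 := by
  rintro r (⟨v, rfl⟩ | ⟨v, w, hvw, rfl⟩)
  · rw [map_pow, FreeGroup.lift_apply_of, retractFun]
    classical
    by_cases h : v ∈ A
    · erw [dif_pos h]
      have : (PresentedGroup.of (⟨v, h⟩ : A) : GraphProduct (Γ.induce A) (fun v => o v)) ^ o v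
          = PresentedGroup.mk _ (FreeGroup.of (⟨v, h⟩ : A) ^ o v) := by
        simp [PresentedGroup.of, map_pow]
      erw [this]
      exact mk_rel_eq_one (Or.inl ⟨⟨v, h⟩, rfl⟩)
    · erw [dif_neg h, one_pow]
  · rw [map_commutatorElement, FreeGroup.lift_apply_of, FreeGroup.lift_apply_of, retractFun, retractFun]
    classical
    by_cases hv : v ∈ A
    · by_cases hw : w ∈ A
      · erw [dif_pos hv, dif_pos hw]
        have : (⁅(PresentedGroup.of (⟨v, hv⟩ : A) :
              GraphProduct (Γ.induce A) (fun v => o v)), PresentedGroup.of (⟨w, hw⟩ : A)⁆)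
            = PresentedGroup.mk (graphProductRels (Γ.induce A) (fun v => o v)) (⁅FreeGroup.of (⟨v, hv⟩ : A), FreeGroup.of (⟨w, hw⟩ : A)⁆) := by
          simp [PresentedGroup.of, map_commutatorElement]
        erw [this]
        exact mk_rel_eq_one (Or.inr ⟨⟨v, hv⟩, ⟨w, hw⟩, hvw, rfl⟩)
      · erw [dif_neg hw, commutatorElement_def]; group
    · erw [dif_neg hv, commutatorElement_def]; group

/-- The retraction `G(Γ) → G(Γ[A])`. -/
noncomputable def gpRetract (Γ : SimpleGraph V) (o : V → ℕ) (A : Set V) :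
    GraphProduct Γ o →* GraphProduct (Γ.induce A) (fun v => o v) :=
  PresentedGroup.toGroup (bwd_rels Γ o A)

lemma gpInclusion_of (v : A) :
    gpInclusion Γ o A (PresentedGroup.of v) = PresentedGroup.of (v : V) :=
  PresentedGroup.toGroup.of _

lemma gpRetract_of (v : V) :
    gpRetract Γ o A (PresentedGroup.of v) = retractFun Γ o A v :=
  PresentedGroup.toGroup.of _

lemma gpRetract_inclusion (x : GraphProduct (Γ.induce A) (fun v => o v)) :
    gpRetract Γ o A (gpInclusion Γ o A x) = x := by
  have : (gpRetract Γ o A).comp (gpInclusion Γ o A)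
      = MonoidHom.id (GraphProduct (Γ.induce A) (fun v => o v)) := by
    apply PresentedGroup.ext
    intro v
    change gpRetract Γ o A (gpInclusion Γ o A (PresentedGroup.of v)) = PresentedGroup.of v
    rw [gpInclusion_of]
    show gpRetract Γ o A (PresentedGroup.of (v : V)) = _
    erw [gpRetract_of, retractFun, dif_pos v.2]
  calc gpRetract Γ o A (gpInclusion Γ o A x)
      = ((gpRetract Γ o A).comp (gpInclusion Γ o A)) x := rfl
    _ = x := by rw [this]; rfl

end Aux

/-- For an induced subgraph `Γ' = Γ[A]` of a graph product graph `Γ` of finite cyclic groups,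
the canonical homomorphism `G(Γ') → G(Γ)` (sending generators to generators) is injective, and
consequently `Cay(G(Γ'))` is a subgraph of `Cay(G(Γ))` (the injection carries edges to
edges). -/
theorem stmt_15 {V : Type} [Finite V] (Γ : SimpleGraph V) (o : V → ℕ) (ho : ∀ v, 2 ≤ o v)
    (A : Set V) :
    ∃ f : GraphProduct (Γ.induce A) (fun v => o v) →* GraphProduct Γ o,
      Function.Injective f ∧
      (∀ v : A, f (PresentedGroup.of v) = PresentedGroup.of (v : V)) ∧
      ∀ a b, (cayleyGraphGP (Γ.induce A) (fun v => o v)).Adj a b →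
        (cayleyGraphGP Γ o).Adj (f a) (f b) := by
  refine ⟨gpInclusion Γ o A, ?_, fun v => gpInclusion_of v, ?_⟩
  · intro x y hxy
    have := congrArg (gpRetract Γ o A) hxy
    rwa [gpRetract_inclusion, gpRetract_inclusion] at this
  · have hinj : Function.Injective (gpInclusion Γ o A) := by
      intro x y hxy
      have := congrArg (gpRetract Γ o A) hxy
      rwa [gpRetract_inclusion, gpRetract_inclusion] at this
    intro a b hab
    obtain ⟨hne, h⟩ := hab
    refine ⟨fun h' => hne (hinj h'), ?_⟩
    rcases h with ⟨s, ⟨v, rfl⟩, rfl⟩ | ⟨s, ⟨v, rfl⟩, rfl⟩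
    · exact Or.inl ⟨PresentedGroup.of (v : V), ⟨(v : V), rfl⟩, by
        exact (map_mul (gpInclusion Γ o A) _ _).trans (congrArg _ (gpInclusion_of v))⟩
    · exact Or.inr ⟨PresentedGroup.of (v : V), ⟨(v : V), rfl⟩, by
        exact (map_mul (gpInclusion Γ o A) _ _).trans (congrArg _ (gpInclusion_of v))⟩
end
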